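/- arXiv:1305.2434 — 4 statements merged into one kernel-verified Lean document; each statement's English description precedes it below -/
import Mathlib

section
/- Let a < 0 < b and f(r) = 1 + a·r for r ≤ 0, f(r) = e^{-b·r} for r > 0, with a + b = 0. Suppose (r(t), θ(t)) solves the geodesic equations r'' - f'(r) f(r) (θ')² = 0 and (f(r)² θ')' = 0 on [0, ∞), with (r'(0), θ'(0)) ≠ (0,0). Then r(t) → -∞ as t → ∞ or the geodesic is unbounded; in particular no maximally extended nonconstant geodesic stays in a bounded region of r. -/
open Set

private lemma constOnIci (F : ℝ → ℝ) (h : ∀ t ∈ Set.Ici (0:ℝ), HasDerivAt F 0 t) :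
    ∀ t ∈ Set.Ici (0:ℝ), F t = F 0 := by
  intro t ht
  have := constant_of_has_deriv_right_zero (f := F) (a := 0) (b := t)
    (fun x hx => (h x hx.1).continuousAt.continuousWithinAt)
    (fun x hx => (h x hx.1).hasDerivWithinAt)
  exact this t (Set.right_mem_Icc.2 ht)

private lemma antiOnIci (F G : ℝ → ℝ) (h : ∀ t ∈ Set.Ici (0:ℝ), HasDerivAt F (G t) t)
    (h0 : ∀ t ∈ Set.Ici (0:ℝ), G t ≤ 0) : AntitoneOn F (Set.Ici 0) := by
  apply antitoneOn_of_deriv_nonpos (convex_Ici 0)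
    (fun x hx => (h x hx).continuousAt.continuousWithinAt)
  · intro x hx
    rw [interior_Ici] at hx
    exact ((h x (Set.mem_Ici.2 (le_of_lt hx))).differentiableAt).differentiableWithinAt
  · intro x hx
    rw [interior_Ici] at hx
    rw [(h x (Set.mem_Ici.2 (le_of_lt hx))).deriv]
    exact h0 x (Set.mem_Ici.2 (le_of_lt hx))

set_option maxHeartbeats 1000000 in
/-- When `a + b = 0`, the surface of revolution with profile
`f(r) = 1 + a r` (`r ≤ 0`), `f(r) = e^{-b r}` (`r > 0`) is nontrapping:
no maximally extended nonconstant geodesic stays in a bounded region of `r`. -/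
theorem cone_cusp_nontrapping (a b : ℝ) (ha : a < 0) (hb : 0 < b) (hab : a + b = 0)
    (f : ℝ → ℝ)
    (hf : ∀ s : ℝ, f s = if s ≤ 0 then 1 + a * s else Real.exp (-b * s))
    (r θ r' θ' r'' : ℝ → ℝ)
    (hr : ∀ t, HasDerivAt r (r' t) t)
    (hr' : ∀ t, HasDerivAt r' (r'' t) t)
    (hθ : ∀ t, HasDerivAt θ (θ' t) t)
    (hgeo1 : ∀ t ∈ Set.Ici (0:ℝ), r'' t - deriv f (r t) * f (r t) * (θ' t) ^ 2 = 0)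
    (hgeo2 : ∀ t ∈ Set.Ici (0:ℝ), HasDerivAt (fun s => f (r s) ^ 2 * θ' s) 0 t)
    (hne : (r' 0, θ' 0) ≠ (0, 0)) :
    ¬ ∃ M : ℝ, ∀ t ∈ Set.Ici (0:ℝ), |r t| ≤ M := by
  rintro ⟨M, hM⟩
  have hba : b = -a := by linarith
  have hM0 : 0 ≤ M := (abs_nonneg _).trans (hM 0 (Set.mem_Ici.2 le_rfl))
  -- positivity of f
  have hfpos : ∀ s, 0 < f s := by
    intro s
    rw [hf s]
    split_ifs with h
    · nlinarith [mul_nonneg (neg_nonneg.2 (le_of_lt ha)) (neg_nonneg.2 h)]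
    · exact Real.exp_pos _
  -- derivative of f
  set fd : ℝ → ℝ := fun s => if s ≤ 0 then a else -b * Real.exp (-b * s) with hfd
  have hfderiv : ∀ s, HasDerivAt f (fd s) s := by
    intro s
    rcases lt_trichotomy s 0 with hs | hs | hs
    · have heq : f =ᶠ[nhds s] (fun x => 1 + a * x) := by
        filter_upwards [Iio_mem_nhds hs] with x hx
        rw [hf x, if_pos (le_of_lt hx)]
      have : HasDerivAt (fun x : ℝ => 1 + a * x) a s := by
        simpa using ((hasDerivAt_id s).const_mul a).const_add 1
      have := heq.hasDerivAt_iff.2 this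
      simpa [hfd, if_pos (le_of_lt hs)] using this
    · subst hs
      have h1 : HasDerivWithinAt f a (Set.Iic 0) 0 := by
        have : HasDerivAt (fun x : ℝ => 1 + a * x) a 0 := by
          simpa using ((hasDerivAt_id (0:ℝ)).const_mul a).const_add 1
        refine this.hasDerivWithinAt.congr (fun x hx => ?_) ?_
        · rw [hf x, if_pos (Set.mem_Iic.1 hx)]
        · rw [hf 0, if_pos le_rfl]
      have h2 : HasDerivWithinAt f a (Set.Ici 0) 0 := by
        have : HasDerivAt (fun x : ℝ => Real.exp (-b * x)) a 0 := by
          have hlin : HasDerivAt (fun x : ℝ => -b * x) (-b) (0:ℝ) := by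
            simpa using (hasDerivAt_id (0:ℝ)).const_mul (-b)
          have := hlin.exp
          norm_num at this
          simpa [hba] using this
        refine this.hasDerivWithinAt.congr (fun x hx => ?_) ?_
        · rw [hf x]
          split_ifs with h
          · have : x = 0 := le_antisymm h hx
            simp [this]
          · rfl
        · rw [hf 0, if_pos le_rfl]; simp
      have := h1.union h2
      rw [Set.Iic_union_Ici] at this
      have := this.hasDerivAt (by simp)
      simpa [hfd] using this
    · have heq : f =ᶠ[nhds s] (fun x => Real.exp (-b * x)) := by
        filter_upwards [Ioi_mem_nhds hs] with x hx
        rw [hf x, if_neg (not_le.2 hx)]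
      have hE : HasDerivAt (fun x : ℝ => Real.exp (-b * x)) (-b * Real.exp (-b * s)) s := by
        have hlin : HasDerivAt (fun x : ℝ => -b * x) (-b) s := by
          simpa using (hasDerivAt_id s).const_mul (-b)
        have := hlin.exp
        simpa [mul_comm] using this
      have := heq.hasDerivAt_iff.2 hE
      simpa [hfd, if_neg (not_le.2 hs)] using this
  have hderiv_eq : ∀ s, deriv f s = fd s := fun s => (hfderiv s).deriv
  -- bounds when |s| ≤ M
  have hfd_bound : ∀ s, |s| ≤ M → fd s ≤ -(b * Real.exp (-b * M)) := by
    intro s hs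
    rw [abs_le] at hs
    have hexp : Real.exp (-b * M) ≤ 1 := by
      rw [← Real.exp_zero]
      exact Real.exp_le_exp.2 (by nlinarith)
    simp only [hfd]
    split_ifs with h
    · nlinarith
    · have : Real.exp (-b * M) ≤ Real.exp (-b * s) := Real.exp_le_exp.2 (by nlinarith)
      nlinarith
  have hf_upper : ∀ s, |s| ≤ M → f s ≤ 1 + b * M := by
    intro s hs
    rw [abs_le] at hs
    rw [hf s]
    split_ifs with h
    · nlinarith
    · have := Real.exp_le_one_iff.2 (by nlinarith : -b * s ≤ 0)
      nlinarith
  -- Clairaut constant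
  set c := f (r 0) ^ 2 * θ' 0 with hc
  have hclair : ∀ t ∈ Set.Ici (0:ℝ), f (r t) ^ 2 * θ' t = c :=
    constOnIci _ hgeo2
  have hrM : ∀ t ∈ Set.Ici (0:ℝ), |r t| ≤ M := hM
  by_cases hc0 : c = 0
  · -- radial case: θ' ≡ 0, r linear
    have hθ0 : θ' 0 = 0 := by
      have hp := hfpos (r 0)
      have h2 : (0:ℝ) < f (r 0) ^ 2 := pow_pos hp 2
      have := hclair 0 (Set.mem_Ici.2 le_rfl)
      rw [hc0] at this
      exact by nlinarith [this]
    have hv : r' 0 ≠ 0 := by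
      intro h
      exact hne (by rw [h, hθ0])
    have hθz : ∀ t ∈ Set.Ici (0:ℝ), θ' t = 0 := by
      intro t ht
      have h2 : (0:ℝ) < f (r t) ^ 2 := pow_pos (hfpos (r t)) 2
      have := hclair t ht
      rw [hc0] at this
      exact by nlinarith [this]
    have hr''0 : ∀ t ∈ Set.Ici (0:ℝ), r'' t = 0 := by
      intro t ht
      have := hgeo1 t ht
      rw [hθz t ht] at this
      nlinarith [this]
    have hr'const : ∀ t ∈ Set.Ici (0:ℝ), r' t = r' 0 := by
      apply constOnIci
      intro t ht
      have := hr' t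
      rwa [hr''0 t ht] at this
    have hlin : ∀ t ∈ Set.Ici (0:ℝ), r t - r' 0 * t = r 0 := by
      have := constOnIci (fun t => r t - r' 0 * t) (fun t ht => by
        have h1 : HasDerivAt (fun t => r t - r' 0 * t) (r' t - r' 0) t :=
          (hr t).sub (by simpa using (hasDerivAt_id t).const_mul (r' 0))
        rwa [hr'const t ht, sub_self] at h1)
      simpa using this
    set T := (M + |r 0| + 1) / |r' 0| with hT
    have hvpos : 0 < |r' 0| := abs_pos.2 hv
    have hTpos : 0 ≤ T := by positivity
    have h1 : r T - r' 0 * T = r 0 := hlin T (Set.mem_Ici.2 hTpos)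
    have h2 : |r T| ≤ M := hM T (Set.mem_Ici.2 hTpos)
    have h3 : |r' 0 * T| = M + |r 0| + 1 := by
      rw [abs_mul, abs_of_nonneg hTpos, hT]
      field_simp
    have := abs_sub_abs_le_abs_sub (r' 0 * T) (r T)
    have h4 : |r' 0 * T - r T| = |r 0| := by
      rw [← abs_neg]; congr 1; linarith
    rw [h3, h4] at this
    linarith
  · -- rotating case
    set B := b * Real.exp (-b * M) with hB
    have hBpos : 0 < B := by positivity
    set K := 1 + b * M with hK
    have hKpos : 0 < K := by nlinarith
    have hc2 : 0 < c ^ 2 := by positivity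
    set ε := B * c ^ 2 / K ^ 3 with hε
    have hεpos : 0 < ε := by positivity
    have hconc : ∀ t ∈ Set.Ici (0:ℝ), r'' t ≤ -ε := by
      intro t ht
      have hfr := hfpos (r t)
      have hfK : f (r t) ≤ K := hf_upper (r t) (hrM t ht)
      have hfdB : fd (r t) ≤ -B := by
        have := hfd_bound (r t) (hrM t ht)
        rw [hB]; linarith
      have hcl := hclair t ht
      have hg := hgeo1 t ht
      rw [hderiv_eq] at hg
      -- r'' t = fd (r t) * f (r t) * θ' t ^ 2
      have key : r'' t * f (r t) ^ 3 = fd (r t) * c ^ 2 := by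
        have : r'' t = fd (r t) * f (r t) * θ' t ^ 2 := by linarith
        rw [this, ← hcl]; ring
      have hf3 : 0 < f (r t) ^ 3 := by positivity
      have hfK3 : f (r t) ^ 3 ≤ K ^ 3 := pow_le_pow_left₀ hfr.le hfK 3
      have e1 : fd (r t) * c ^ 2 ≤ -B * c ^ 2 := by nlinarith
      have eK : ε * K ^ 3 = B * c ^ 2 := by
        rw [hε]; field_simp
      have e2 : ε * f (r t) ^ 3 ≤ B * c ^ 2 := by nlinarith [hεpos.le]
      nlinarith [key]
    -- r' t ≤ r' 0 - ε t
    have hr'le : ∀ t ∈ Set.Ici (0:ℝ), r' t + ε * t ≤ r' 0 := by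
      have hanti := antiOnIci (fun t => r' t + ε * t) (fun t => r'' t + ε)
        (fun t _ => (hr' t).add (by simpa using (hasDerivAt_id t).const_mul ε))
        (fun t ht => by show r'' t + ε ≤ 0; linarith [hconc t ht])
      intro t ht
      have := hanti (Set.self_mem_Ici) ht ht
      simpa using this
    -- r t ≤ r 0 + r' 0 * t - ε t^2 / 2
    have hrle : ∀ t ∈ Set.Ici (0:ℝ), r t - r' 0 * t + ε * t ^ 2 / 2 ≤ r 0 := by
      have hanti := antiOnIci (fun t => r t - r' 0 * t + ε * t ^ 2 / 2)
        (fun t => r' t - r' 0 + ε * t)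
        (fun t _ => by
          have h1 : HasDerivAt (fun t : ℝ => ε * t ^ 2 / 2) (ε * t) t := by
            have := ((hasDerivAt_pow 2 t).const_mul ε).div_const 2
            refine this.congr_deriv ?_
            push_cast; ring
          have h2 : HasDerivAt (fun t => r t - r' 0 * t) (r' t - r' 0) t :=
            (hr t).sub (by simpa using (hasDerivAt_id t).const_mul (r' 0))
          exact h2.add h1)
        (fun t ht => by show r' t - r' 0 + ε * t ≤ 0; linarith [hr'le t ht])
      intro t ht
      have := hanti (Set.self_mem_Ici) ht ht
      simpa using this
    set S := |r' 0| + M + |r 0| + 1 with hS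
    have hSpos : 0 < S := by positivity
    set T := max 1 (2 / ε * S) with hT
    have hT1 : (1:ℝ) ≤ T := le_max_left _ _
    have hT0 : (0:ℝ) ≤ T := by linarith
    have hTS : 2 / ε * S ≤ T := le_max_right _ _
    have hεT : S ≤ ε * T / 2 := by
      have h := mul_le_mul_of_nonneg_left hTS (le_of_lt hεpos)
      have hid : ε * (2 / ε * S) = 2 * S := by field_simp
      linarith
    have h1 := hrle T (Set.mem_Ici.2 hT0)
    have h2 : -M ≤ r T := (abs_le.1 (hM T (Set.mem_Ici.2 hT0))).1
    have habs0 : -|r 0| ≤ r 0 ∧ r 0 ≤ |r 0| := abs_le.1 le_rfl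
    have habs1 : r' 0 ≤ |r' 0| := le_abs_self _
    -- r T ≤ r 0 + r' 0 * T - ε T^2/2 ≤ r 0 - (M + |r 0| + 1) * T ≤ -(M+1)
    nlinarith [mul_le_mul_of_nonneg_right hεT hT0, mul_le_mul_of_nonneg_right habs1 hT0,
      mul_le_mul_of_nonneg_left hT1 (le_of_lt (by positivity : (0:ℝ) < M + |r 0| + 1))]
end

section
/- Define R₁ and R₃ for fixed z > 0 and ν ∈ ℂ (ν not a nonpositive integer shifted) by I_ν(z) = (z/2)^ν (1+R₁)/Γ(1+ν) and I'_ν(z) = (ν/z)(z/2)^ν (1+R₃)/Γ(1+ν). Then R₁ − R₃ = −z²/(2ν²) + O(1/|ν|³) as |ν| → ∞ with Re ν ≥ 0. -/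
open Filter Asymptotics Complex

/-- The modified Bessel function of the first kind. -/
noncomputable def besselI (ν : ℂ) (z : ℝ) : ℂ :=
  ∑' k : ℕ, ((z : ℂ) / 2) ^ (ν + 2 * (k : ℂ)) /
    ((k.factorial : ℂ) * Complex.Gamma (ν + k + 1))

/-- Derivative of `I_ν` in the argument `z`. -/
noncomputable def besselI' (ν : ℂ) (z : ℝ) : ℂ := deriv (fun t : ℝ => besselI ν t) z

noncomputable def Complex.abs : AbsoluteValue ℂ ℝ where
  toFun := fun z => ‖z‖
  map_mul' := norm_mul
  nonneg' := norm_nonneg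
  eq_zero' := fun _ => norm_eq_zero
  add_le' := norm_add_le

theorem Complex.norm_eq_abs (z : ℂ) : ‖z‖ = Complex.abs z := rfl

theorem Complex.abs_apply (z : ℂ) : Complex.abs z = Real.sqrt (Complex.normSq z) :=
  Complex.norm_def z

theorem Complex.re_le_abs (z : ℂ) : z.re ≤ Complex.abs z := Complex.re_le_norm z

@[simp]
theorem Complex.abs_ofReal (r : ℝ) : Complex.abs (r : ℂ) = |r| := Complex.norm_real r

@[simp]
theorem Complex.abs_natCast (n : ℕ) : Complex.abs (n : ℂ) = n := Complex.norm_natCast n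

@[simp]
theorem Complex.abs_two : Complex.abs (2 : ℂ) = 2 := Complex.norm_two

theorem Complex.abs_cpow_eq_rpow_re_of_pos {x : ℝ} (hx : 0 < x) (y : ℂ) :
    Complex.abs ((x : ℂ) ^ y) = x ^ y.re := Complex.norm_cpow_eq_rpow_re_of_pos hx y


-- abs (ν + j) ≥ abs ν when re ν ≥ 0, j ≥ 0 real
lemma aux_abs_add_ge {ν : ℂ} (hν : 0 ≤ ν.re) {j : ℝ} (hj : 0 ≤ j) :
    Complex.abs ν ≤ Complex.abs (ν + j) := by
  rw [Complex.abs_apply, Complex.abs_apply]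
  apply Real.sqrt_le_sqrt
  simp only [Complex.normSq_apply, Complex.add_re, Complex.add_im, Complex.ofReal_re,
    Complex.ofReal_im, add_zero]
  nlinarith

lemma aux_abs_add_ge' {ν : ℂ} (hν : 0 ≤ ν.re) {j : ℝ} (hj : 0 ≤ j) :
    j ≤ Complex.abs (ν + j) := by
  calc j = (0:ℝ) + j := by ring
  _ ≤ (ν + j).re := by simp [hν]
  _ ≤ Complex.abs (ν + j) := Complex.re_le_abs _

-- |Γ(ν + k + 1)| ≥ k! |Γ(ν+1)|
lemma aux_gamma_lb {ν : ℂ} (hν : 0 ≤ ν.re) (k : ℕ) :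
    (k.factorial : ℝ) * Complex.abs (Complex.Gamma (ν + 1)) ≤
      Complex.abs (Complex.Gamma (ν + k + 1)) := by
  induction k with
  | zero => simp
  | succ k ih =>
    have hne : ν + k + 1 ≠ 0 := by
      intro h
      have := congrArg Complex.re h
      simp only [Complex.add_re, Complex.natCast_re, Complex.one_re, Complex.zero_re] at this
      have : (0:ℝ) < ν.re + k + 1 := by positivity
      linarith
    have h1 : ν + (k + 1 : ℕ) + 1 = (ν + k + 1) + 1 := by push_cast; ring
    rw [h1, Complex.Gamma_add_one _ hne, map_mul]
    have habs : (k : ℝ) + 1 ≤ Complex.abs (ν + k + 1) := by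
      have := aux_abs_add_ge' hν (j := (k:ℝ)+1) (by positivity)
      rwa [show ((((k:ℝ)+1 : ℝ)) : ℂ) = (k : ℂ) + 1 by push_cast; ring, ← add_assoc] at this
    calc ((k+1).factorial : ℝ) * Complex.abs (Complex.Gamma (ν + 1))
        = ((k:ℝ)+1) * ((k.factorial : ℝ) * Complex.abs (Complex.Gamma (ν + 1))) := by
          push_cast [Nat.factorial_succ]; ring
      _ ≤ Complex.abs (ν + k + 1) * Complex.abs (Complex.Gamma (ν + k + 1)) := by
          apply mul_le_mul habs ih (by positivity) (by positivity)

-- |Γ(ν + k + 3)| ≥ |ν|² |Γ(ν+1)|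
lemma aux_gamma_lb2 {ν : ℂ} (hν : 0 ≤ ν.re) (k : ℕ) :
    Complex.abs ν ^ 2 * Complex.abs (Complex.Gamma (ν + 1)) ≤
      Complex.abs (Complex.Gamma (ν + k + 3)) := by
  have hbase : Complex.abs ν ^ 2 * Complex.abs (Complex.Gamma (ν + 1)) ≤
      Complex.abs (Complex.Gamma (ν + 3)) := by
    have h1 : ν + 1 ≠ 0 := by
      intro h; have := congrArg Complex.re h; simp at this; linarith
    have h2 : ν + 2 ≠ 0 := by
      intro h; have := congrArg Complex.re h; simp at this; linarith
    have e1 : Complex.Gamma (ν + 3) = (ν + 2) * ((ν + 1) * Complex.Gamma (ν + 1)) := by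
      rw [show ν + 3 = (ν + 2) + 1 by ring, Complex.Gamma_add_one _ h2,
        show ν + 2 = (ν + 1) + 1 by ring, Complex.Gamma_add_one _ h1]
    rw [e1, map_mul, map_mul]
    have b1 : Complex.abs ν ≤ Complex.abs (ν + 1) := by
      simpa using aux_abs_add_ge hν (j := 1) one_pos.le
    have b2 : Complex.abs ν ≤ Complex.abs (ν + 2) := by
      simpa using aux_abs_add_ge hν (j := 2) (by norm_num)
    calc Complex.abs ν ^ 2 * Complex.abs (Complex.Gamma (ν + 1))
        = Complex.abs ν * (Complex.abs ν * Complex.abs (Complex.Gamma (ν + 1))) := by ring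
      _ ≤ Complex.abs (ν + 2) * (Complex.abs (ν + 1) * Complex.abs (Complex.Gamma (ν + 1))) := by
          apply mul_le_mul b2 (mul_le_mul b1 le_rfl (by positivity) (by positivity))
            (by positivity) (by positivity)
  induction k with
  | zero => simpa using hbase
  | succ k ih =>
    have hne : ν + k + 3 ≠ 0 := by
      intro h
      have := congrArg Complex.re h
      simp only [Complex.add_re, Complex.natCast_re, Complex.zero_re] at this
      have h3 : (3:ℂ).re = 3 := by norm_num
      rw [h3] at this
      have : (0:ℝ) < ν.re + k + 3 := by positivity
      linarith
    have h1 : ν + (k + 1 : ℕ) + 3 = (ν + k + 3) + 1 := by push_cast; ring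
    rw [h1, Complex.Gamma_add_one _ hne, map_mul]
    have habs : (1 : ℝ) ≤ Complex.abs (ν + k + 3) := by
      have := aux_abs_add_ge' hν (j := (k:ℝ)+3) (by positivity)
      rw [show ((((k:ℝ)+3 : ℝ)) : ℂ) = (k : ℂ) + 3 by push_cast; ring, ← add_assoc] at this
      linarith [this]
    calc Complex.abs ν ^ 2 * Complex.abs (Complex.Gamma (ν + 1))
        ≤ Complex.abs (Complex.Gamma (ν + k + 3)) := ih
      _ = 1 * Complex.abs (Complex.Gamma (ν + k + 3)) := by ring
      _ ≤ Complex.abs (ν + k + 3) * Complex.abs (Complex.Gamma (ν + k + 3)) := by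
          apply mul_le_mul habs le_rfl (by positivity) (by positivity)

lemma aux_norm_term {ν : ℂ} {t : ℝ} (ht : 0 < t) (k : ℕ) :
    ‖((t:ℂ)/2) ^ (ν + 2*(k:ℂ)) / ((k.factorial : ℂ) * Complex.Gamma (ν + k + 1))‖
      = (t/2) ^ ν.re * ((t/2)^2)^k / (k.factorial * Complex.abs (Complex.Gamma (ν + k + 1))) := by
  have hb : ((t:ℂ)/2) = (((t/2 : ℝ)) : ℂ) := by push_cast; ring
  rw [norm_div, norm_mul, Complex.norm_eq_abs, Complex.norm_eq_abs, Complex.norm_eq_abs, hb,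
    Complex.abs_cpow_eq_rpow_re_of_pos (by positivity), Complex.abs_natCast]
  congr 1
  have hre : (ν + 2*(k:ℂ)).re = ν.re + (2*k : ℕ) := by
    simp [Complex.add_re, Complex.mul_re]
  rw [hre, Real.rpow_add (by positivity), Real.rpow_natCast, pow_mul]

lemma aux_term_le {ν : ℂ} (hν : 0 ≤ ν.re) {t b : ℝ} (ht : 0 < t) (htb : t ≤ 2*b) (k : ℕ) :
    ‖((t:ℂ)/2) ^ (ν + 2*(k:ℂ)) / ((k.factorial : ℂ) * Complex.Gamma (ν + k + 1))‖
      ≤ b ^ ν.re / Complex.abs (Complex.Gamma (ν + 1)) * ((b^2)^k / k.factorial) := by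
  have hb : 0 < b := by linarith
  have hG1 : 0 < Complex.abs (Complex.Gamma (ν + 1)) := by
    have : Complex.Gamma (ν + 1) ≠ 0 := by
      apply Complex.Gamma_ne_zero_of_re_pos; simp; linarith
    exact AbsoluteValue.pos _ this
  have hGk : (k.factorial : ℝ) * Complex.abs (Complex.Gamma (ν + 1)) ≤
      Complex.abs (Complex.Gamma (ν + k + 1)) := aux_gamma_lb hν k
  rw [aux_norm_term ht]
  have h2 : t/2 ≤ b := by linarith
  have hbound1 : (t/2) ^ ν.re ≤ b ^ ν.re :=
    Real.rpow_le_rpow (by positivity) h2 hν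
  have hbound2 : ((t/2)^2)^k ≤ (b^2)^k := by
    apply pow_le_pow_left₀ (by positivity)
    nlinarith
  calc (t/2) ^ ν.re * ((t/2)^2)^k / ((k.factorial : ℝ) * Complex.abs (Complex.Gamma (ν + k + 1)))
      ≤ b ^ ν.re * (b^2)^k / ((k.factorial : ℝ) * ((k.factorial : ℝ) * Complex.abs (Complex.Gamma (ν + 1)))) := by
        apply div_le_div₀ (by positivity) (by exact mul_le_mul hbound1 hbound2 (by positivity) (by positivity))
          (by positivity)
        exact mul_le_mul_of_nonneg_left hGk (by positivity)
    _ ≤ b ^ ν.re * (b^2)^k / ((k.factorial : ℝ) * (1 * Complex.abs (Complex.Gamma (ν + 1)))) := by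
        apply div_le_div_of_nonneg_left (by positivity) (by positivity)
        apply mul_le_mul_of_nonneg_left _ (by positivity)
        apply mul_le_mul_of_nonneg_right _ (by positivity)
        exact_mod_cast Nat.one_le_iff_ne_zero.mpr k.factorial_ne_zero
    _ = b ^ ν.re / Complex.abs (Complex.Gamma (ν + 1)) * ((b^2)^k / k.factorial) := by
        field_simp

lemma aux_summable {ν : ℂ} (hν : 0 ≤ ν.re) {t : ℝ} (ht : 0 < t) :
    Summable (fun k : ℕ => ((t:ℂ)/2) ^ (ν + 2*(k:ℂ)) / ((k.factorial : ℂ) * Complex.Gamma (ν + k + 1))) := by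
  apply Summable.of_norm_bounded
    (((Real.summable_pow_div_factorial ((t/2)^2)).mul_left ((t/2) ^ ν.re / Complex.abs (Complex.Gamma (ν + 1)))))
  intro k
  simpa using aux_term_le hν ht (b := t/2) (by linarith) k

lemma aux_hasDerivAt_cpowhalf (w : ℂ) {t : ℝ} (ht : 0 < t) :
    HasDerivAt (fun s : ℝ => ((s:ℂ)/2) ^ w) (w / t * ((t:ℂ)/2) ^ w) t := by
  have hne : ((t:ℂ)/2) ≠ 0 := by
    simp only [ne_eq, div_eq_zero_iff, Complex.ofReal_eq_zero]
    push_neg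
    exact ⟨ht.ne', by norm_num⟩
  have h0 : ((t:ℂ)/2) ∈ Complex.slitPlane := by
    rw [Complex.mem_slitPlane_iff]
    left
    simp [Complex.div_re]
    positivity
  have h1 : HasDerivAt (fun c : ℂ => c/2) ((1:ℂ)/2) (t:ℂ) := by
    simpa using (hasDerivAt_id ((t:ℂ))).div_const 2
  have h2 : HasDerivAt (fun c : ℂ => (c/2) ^ w) (w * ((t:ℂ)/2) ^ (w-1) * (1/2)) (t:ℂ) :=
    h1.cpow_const h0
  have h3 := h2.comp_ofReal
  convert h3 using 1
  rw [Complex.cpow_sub _ _ hne, Complex.cpow_one]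
  have htne : (t:ℂ) ≠ 0 := Complex.ofReal_ne_zero.mpr ht.ne'
  field_simp

lemma aux_besselI'_eq {ν : ℂ} (hν : 0 ≤ ν.re) {z : ℝ} (hz : 0 < z) :
    besselI' ν z = ∑' k : ℕ, (ν + 2*(k:ℂ))/(z:ℂ) *
      (((z:ℂ)/2) ^ (ν + 2*(k:ℂ)) / ((k.factorial:ℂ) * Complex.Gamma (ν+k+1))) := by
  set g : ℕ → ℝ → ℂ := fun k t =>
    ((t:ℂ)/2) ^ (ν + 2*(k:ℂ)) / ((k.factorial:ℂ) * Complex.Gamma (ν+k+1)) with hg_def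
  set g' : ℕ → ℝ → ℂ := fun k t => (ν + 2*(k:ℂ))/(t:ℂ) * g k t with hg'_def
  have hG1 : 0 < Complex.abs (Complex.Gamma (ν + 1)) := by
    have : Complex.Gamma (ν + 1) ≠ 0 := by
      apply Complex.Gamma_ne_zero_of_re_pos; simp; linarith
    exact AbsoluteValue.pos _ this
  set C : ℝ := (Complex.abs ν + 2) * (2/z) * (z ^ ν.re / Complex.abs (Complex.Gamma (ν + 1)))
    with hC_def
  set u : ℕ → ℝ := fun k => C * ((2*z^2)^k / k.factorial) with hu_def
  have hu : Summable u := (Real.summable_pow_div_factorial (2*z^2)).mul_left C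
  have hderiv : ∀ k : ℕ, ∀ y : ℝ, y ∈ Set.Ioo (z/2) (2*z) → HasDerivAt (g k) (g' k y) y := by
    intro k y hy
    have hy0 : 0 < y := lt_trans (by positivity) hy.1
    have := (aux_hasDerivAt_cpowhalf (ν + 2*(k:ℂ)) hy0).div_const
      ((k.factorial:ℂ) * Complex.Gamma (ν+k+1))
    convert this using 1
    · rfl
    simp only [hg'_def, hg_def]
    ring
  have hbound : ∀ k : ℕ, ∀ y : ℝ, y ∈ Set.Ioo (z/2) (2*z) → ‖g' k y‖ ≤ u k := by
    intro k y hy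
    have hy0 : 0 < y := lt_trans (by positivity) hy.1
    have h2k : (k:ℝ) ≤ 2^k := le_of_lt (by exact_mod_cast Nat.lt_two_pow_self)
    have h1k : (1:ℝ) ≤ 2^k := one_le_pow₀ (by norm_num)
    have ha0 : (0:ℝ) ≤ Complex.abs ν := AbsoluteValue.nonneg _ _
    have hA : Complex.abs (ν + 2*(k:ℂ)) ≤ (Complex.abs ν + 2) * 2^k := by
      calc Complex.abs (ν + 2*(k:ℂ)) ≤ Complex.abs ν + Complex.abs (2*(k:ℂ)) :=
            AbsoluteValue.add_le _ _ _
        _ = Complex.abs ν + 2*k := by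
            rw [map_mul]
            simp [Complex.abs_natCast]
        _ ≤ (Complex.abs ν + 2) * 2^k := by nlinarith
    have hB : Complex.abs ((y:ℂ))⁻¹ ≤ 2/z := by
      rw [map_inv₀, Complex.abs_ofReal, abs_of_pos hy0]
      rw [inv_le_iff_one_le_mul₀ hy0]
      · calc (1:ℝ) = (2/z) * (z/2) := by field_simp
          _ ≤ (2/z) * y := by
            apply mul_le_mul_of_nonneg_left (le_of_lt hy.1) (by positivity)
        
    have hC' : ‖g k y‖ ≤ z ^ ν.re / Complex.abs (Complex.Gamma (ν + 1)) * ((z^2)^k / k.factorial) :=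
      aux_term_le hν hy0 (by linarith [hy.2]) k
    have : ‖g' k y‖ = Complex.abs (ν + 2*(k:ℂ)) * Complex.abs ((y:ℂ))⁻¹ * ‖g k y‖ := by
      simp only [hg'_def, div_eq_mul_inv]
      rw [norm_mul, norm_mul, Complex.norm_eq_abs, Complex.norm_eq_abs]
    rw [this]
    calc Complex.abs (ν + 2*(k:ℂ)) * Complex.abs ((y:ℂ))⁻¹ * ‖g k y‖
        ≤ ((Complex.abs ν + 2) * 2^k) * (2/z) *
            (z ^ ν.re / Complex.abs (Complex.Gamma (ν + 1)) * ((z^2)^k / k.factorial)) := by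
          apply mul_le_mul _ hC' (norm_nonneg _) (by positivity)
          apply mul_le_mul hA hB (AbsoluteValue.nonneg _ _) (by positivity)
      _ = u k := by
          simp only [hu_def, hC_def, mul_pow]
          ring
  have hz_mem : z ∈ Set.Ioo (z/2) (2*z) := ⟨by linarith, by linarith⟩
  have hsum0 : Summable (fun k => g k z) := aux_summable hν hz
  have hkey : HasDerivAt (fun y : ℝ => ∑' k, g k y) (∑' k, g' k z) z :=
    hasDerivAt_tsum_of_isPreconnected hu isOpen_Ioo (isPreconnected_Ioo)
      hderiv hbound hz_mem hsum0 hz_mem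
  have heq : (fun t : ℝ => besselI ν t) = fun y : ℝ => ∑' k, g k y := rfl
  rw [besselI', heq, hkey.deriv]

lemma aux_summable2 {ν : ℂ} (hν : 0 ≤ ν.re) {z : ℝ} (hz : 0 < z) :
    Summable (fun k : ℕ => (2*(k:ℂ))/(z:ℂ) *
      (((z:ℂ)/2) ^ (ν + 2*(k:ℂ)) / ((k.factorial:ℂ) * Complex.Gamma (ν+k+1)))) := by
  apply Summable.of_norm_bounded
    (((Real.summable_pow_div_factorial (2*(z/2)^2)).mul_left
      ((2/z) * ((z/2) ^ ν.re / Complex.abs (Complex.Gamma (ν + 1))))))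
  intro k
  rw [norm_mul]
  have h1 : ‖(2*(k:ℂ))/(z:ℂ)‖ ≤ 2/z * (2^k) := by
    rw [norm_div, Complex.norm_eq_abs, Complex.norm_eq_abs, map_mul, Complex.abs_ofReal,
      abs_of_pos hz, Complex.abs_natCast, Complex.abs_two]
    rw [div_le_iff₀ hz] at *
    have h2k : (k:ℝ) ≤ 2^k := le_of_lt (by exact_mod_cast Nat.lt_two_pow_self)
    calc 2 * (k:ℝ) ≤ 2 * 2^k := by linarith
      _ = 2/z * 2^k * z := by field_simp
  have h2 := aux_term_le hν hz (b := z/2) (by linarith) k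
  calc ‖(2*(k:ℂ))/(z:ℂ)‖ * ‖((z:ℂ)/2) ^ (ν + 2*(k:ℂ)) / ((k.factorial:ℂ) * Complex.Gamma (ν+k+1))‖
      ≤ (2/z * 2^k) * ((z/2) ^ ν.re / Complex.abs (Complex.Gamma (ν + 1)) * (((z/2)^2)^k / k.factorial)) := by
        apply mul_le_mul h1 h2 (norm_nonneg _) (by positivity)
    _ = (2/z) * ((z/2) ^ ν.re / Complex.abs (Complex.Gamma (ν + 1))) * ((2*(z/2)^2)^k / k.factorial) := by
        rw [mul_pow]
        ring

lemma aux_recurrence {ν : ℂ} (hν : 0 ≤ ν.re) {z : ℝ} (hz : 0 < z) :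
    besselI' ν z = ν/(z:ℂ) * besselI ν z + besselI (ν+1) z := by
  have hsumT := aux_summable hν hz
  have hsum1 : Summable (fun k : ℕ => ν/(z:ℂ) *
      (((z:ℂ)/2) ^ (ν + 2*(k:ℂ)) / ((k.factorial:ℂ) * Complex.Gamma (ν+k+1)))) :=
    hsumT.mul_left _
  have hsum2 := aux_summable2 hν hz
  rw [aux_besselI'_eq hν hz]
  have hsplit : ∀ k : ℕ, (ν + 2*(k:ℂ))/(z:ℂ) *
      (((z:ℂ)/2) ^ (ν + 2*(k:ℂ)) / ((k.factorial:ℂ) * Complex.Gamma (ν+k+1)))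
      = ν/(z:ℂ) * (((z:ℂ)/2) ^ (ν + 2*(k:ℂ)) / ((k.factorial:ℂ) * Complex.Gamma (ν+k+1)))
        + (2*(k:ℂ))/(z:ℂ) * (((z:ℂ)/2) ^ (ν + 2*(k:ℂ)) / ((k.factorial:ℂ) * Complex.Gamma (ν+k+1))) := by
    intro k; ring
  rw [tsum_congr hsplit, Summable.tsum_add hsum1 hsum2, tsum_mul_left]
  congr 1
  rw [besselI, Summable.tsum_eq_zero_add hsum2]
  simp only [Nat.cast_zero, mul_zero, zero_div, zero_mul, zero_add]
  apply tsum_congr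
  intro k
  have hbne : ((z:ℂ)/2) ≠ 0 := by
    simp only [ne_eq, div_eq_zero_iff, Complex.ofReal_eq_zero]
    push_neg
    exact ⟨hz.ne', by norm_num⟩
  have hexp : ν + 2*(((k+1:ℕ)):ℂ) = ((ν+1) + 2*(k:ℂ)) + 1 := by push_cast; ring
  rw [hexp, Complex.cpow_add _ _ hbne, Complex.cpow_one]
  have hΓ : ν + ((k+1:ℕ):ℂ) + 1 = (ν+1) + k + 1 := by push_cast; ring
  rw [hΓ]
  have hfact : (((k+1).factorial : ℕ):ℂ) = ((k:ℂ)+1) * (k.factorial:ℂ) := by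
    push_cast [Nat.factorial_succ]; ring
  rw [hfact]
  have hΓne : Complex.Gamma ((ν+1) + k + 1) ≠ 0 := by
    apply Complex.Gamma_ne_zero_of_re_pos
    simp only [Complex.add_re, Complex.one_re, Complex.natCast_re]
    positivity
  have hk1 : ((k:ℂ)+1) ≠ 0 := Nat.cast_add_one_ne_zero k
  have hfne : (k.factorial:ℂ) ≠ 0 := by exact_mod_cast Nat.cast_ne_zero.mpr k.factorial_ne_zero
  have hzne : (z:ℂ) ≠ 0 := Complex.ofReal_ne_zero.mpr hz.ne'
  rw [div_mul_div_comm, div_eq_div_iff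
    (mul_ne_zero hzne (mul_ne_zero (mul_ne_zero (by push_cast; exact hk1) hfne) hΓne))
    (mul_ne_zero hfne hΓne)]
  push_cast
  ring

lemma aux_final {z : ℝ} (hz : 0 < z) {ν : ℂ} (hνre : 0 ≤ ν.re) (hν1 : 1 ≤ Complex.abs ν) :
    ‖Complex.Gamma (1+ν) * ((z:ℂ)/2)^(-ν) * besselI ν z
      - (z:ℂ)/ν * Complex.Gamma (1+ν) * ((z:ℂ)/2)^(-ν) * besselI' ν z
      + (z:ℂ)^2/(2*ν^2)‖
    ≤ (z^2/2 * (1 + (∑' k:ℕ, ((z^2/4)^(k+1)/((k+1).factorial : ℝ)))))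
        * ‖1/ν^3‖ := by
  have hzC : (z:ℂ) ≠ 0 := Complex.ofReal_ne_zero.mpr hz.ne'
  have hbne : ((z:ℂ)/2) ≠ 0 := by
    simp only [ne_eq, div_eq_zero_iff, Complex.ofReal_eq_zero]; push_neg
    exact ⟨hz.ne', by norm_num⟩
  have hν0 : ν ≠ 0 := by
    intro h; rw [h] at hν1; simp at hν1; linarith
  have hν1ne : ν + 1 ≠ 0 := by
    intro h; have := congrArg Complex.re h; simp at this; linarith
  have hΓ1 : Complex.Gamma (ν+1) ≠ 0 :=
    Complex.Gamma_ne_zero_of_re_pos (by simp; linarith)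
  have hΓ2 : Complex.Gamma (ν+2) ≠ 0 :=
    Complex.Gamma_ne_zero_of_re_pos (by simp; norm_num; linarith)
  set c : ℕ → ℂ := fun k => Complex.Gamma (ν+1) * (((z:ℂ)/2)^2)^k /
    ((k.factorial : ℂ) * Complex.Gamma (ν+k+2)) with hc_def
  -- summability of c
  have hcnorm : ∀ k : ℕ, ‖c k‖ = Complex.abs (Complex.Gamma (ν+1)) * ((z/2)^2)^k /
      ((k.factorial : ℝ) * Complex.abs (Complex.Gamma (ν+k+2))) := by
    intro k
    simp only [hc_def, norm_div, norm_mul, Complex.norm_eq_abs, map_pow, map_mul,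
      Complex.abs_natCast]
    congr 2
    rw [map_div₀, Complex.abs_ofReal, Complex.abs_two, abs_of_pos hz]
  have hΓk2 : ∀ k : ℕ, (k.factorial : ℝ) * Complex.abs (Complex.Gamma (ν+2)) ≤
      Complex.abs (Complex.Gamma (ν+k+2)) := by
    intro k
    have := aux_gamma_lb (ν := ν+1) (by simp; linarith) k
    rw [show ν+1+(k:ℂ)+1 = ν+k+2 by ring, show ν+1+1 = ν+2 by ring] at this
    exact this
  have hΓ2pos : 0 < Complex.abs (Complex.Gamma (ν+2)) := AbsoluteValue.pos _ hΓ2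
  have hΓ1pos : 0 < Complex.abs (Complex.Gamma (ν+1)) := AbsoluteValue.pos _ hΓ1
  have hΓkpos : ∀ k : ℕ, 0 < Complex.abs (Complex.Gamma (ν+k+2)) := by
    intro k
    calc (0:ℝ) < (k.factorial : ℝ) * Complex.abs (Complex.Gamma (ν+2)) := by positivity
      _ ≤ _ := hΓk2 k
  have hcsum : Summable c := by
    apply Summable.of_norm_bounded
      ((Real.summable_pow_div_factorial ((z/2)^2)).mul_left
        (Complex.abs (Complex.Gamma (ν+1)) / Complex.abs (Complex.Gamma (ν+2))))
    intro k
    rw [hcnorm k]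
    have hfact1 : (1:ℝ) ≤ (k.factorial : ℝ) := by
      exact_mod_cast Nat.one_le_iff_ne_zero.mpr k.factorial_ne_zero
    calc Complex.abs (Complex.Gamma (ν+1)) * ((z/2)^2)^k /
        ((k.factorial : ℝ) * Complex.abs (Complex.Gamma (ν+k+2)))
        ≤ Complex.abs (Complex.Gamma (ν+1)) * ((z/2)^2)^k /
          ((k.factorial : ℝ) * ((1:ℝ) * Complex.abs (Complex.Gamma (ν+2)))) := by
          apply div_le_div_of_nonneg_left (by positivity) (by positivity)
          apply mul_le_mul_of_nonneg_left _ (by positivity)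
          calc (1:ℝ) * Complex.abs (Complex.Gamma (ν+2))
              ≤ (k.factorial : ℝ) * Complex.abs (Complex.Gamma (ν+2)) := by
                apply mul_le_mul_of_nonneg_right hfact1 (by positivity)
            _ ≤ _ := hΓk2 k
      _ = Complex.abs (Complex.Gamma (ν+1)) / Complex.abs (Complex.Gamma (ν+2)) *
          (((z/2)^2)^k / k.factorial) := by field_simp
  -- the key identity
  have hrec := aux_recurrence hνre hz
  have hkey : Complex.Gamma (1+ν) * ((z:ℂ)/2)^(-ν) * besselI ν z
      - (z:ℂ)/ν * Complex.Gamma (1+ν) * ((z:ℂ)/2)^(-ν) * besselI' ν z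
      = -((z:ℂ)^2/(2*ν)) * ∑' k, c k := by
    rw [hrec]
    have e1 : Complex.Gamma (1+ν) * ((z:ℂ)/2)^(-ν) * besselI ν z
        - (z:ℂ)/ν * Complex.Gamma (1+ν) * ((z:ℂ)/2)^(-ν) *
          (ν/(z:ℂ) * besselI ν z + besselI (ν+1) z)
        = -((z:ℂ)/ν) * (Complex.Gamma (1+ν) * (((z:ℂ)/2)^(-ν) * besselI (ν+1) z)) := by
      field_simp
      ring
    rw [e1]
    -- (z/2)^(-ν) * besselI (ν+1) z = ∑' (z/2)^(-ν) * T₊ k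
    rw [besselI, ← tsum_mul_left, ← tsum_mul_left, ← tsum_mul_left, ← tsum_mul_left]
    apply tsum_congr
    intro k
    have hexp : (ν+1) + 2*(k:ℂ) = -ν + ((ν+1) + 2*(k:ℂ)) + ν := by ring
    have hsplit : ((z:ℂ)/2) ^ ((ν+1) + 2*(k:ℂ)) =
        ((z:ℂ)/2) ^ ((1:ℂ) + 2*(k:ℂ)) * ((z:ℂ)/2) ^ ν := by
      rw [← Complex.cpow_add _ _ hbne]
      congr 1
      ring
    have hpow : ((z:ℂ)/2) ^ ((1:ℂ) + 2*(k:ℂ)) = ((z:ℂ)/2) * (((z:ℂ)/2)^2)^k := by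
      rw [Complex.cpow_add _ _ hbne, Complex.cpow_one]
      congr 1
      rw [show (2*(k:ℂ)) = ((2*k : ℕ) : ℂ) by push_cast; ring, Complex.cpow_natCast, pow_mul]
    have hcpne : ((z:ℂ)/2) ^ ν ≠ 0 := by
      rw [Ne, Complex.cpow_eq_zero_iff]
      push_neg
      intro h; exact absurd h hbne
    have hΓarg : (ν+1) + (k:ℂ) + 1 = ν + k + 2 := by ring
    have hΓkne : Complex.Gamma (ν+k+2) ≠ 0 := by
      have h := hΓkpos k
      intro hh
      rw [hh] at h
      simp at h
    have hfne : (k.factorial:ℂ) ≠ 0 := by exact_mod_cast Nat.cast_ne_zero.mpr k.factorial_ne_zero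
    rw [hsplit, hpow, hΓarg, Complex.cpow_neg, hc_def, show (1:ℂ)+ν = ν+1 by ring]
    have hinv : (((z:ℂ)/2)^ν)⁻¹ * (((z:ℂ)/2) * ((((z:ℂ)/2)^2)^k) * ((z:ℂ)/2)^ν
        / ((k.factorial:ℂ) * Complex.Gamma (ν+k+2)))
        = ((z:ℂ)/2) * ((((z:ℂ)/2)^2)^k) / ((k.factorial:ℂ) * Complex.Gamma (ν+k+2)) := by
      rw [mul_div_assoc', mul_comm ((((z:ℂ)/2)^ν)⁻¹)]
      rw [mul_assoc, mul_inv_cancel₀ hcpne, mul_one]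
    rw [hinv]
    simp only []
    have hzz2 : -((z:ℂ)/ν) * ((z:ℂ)/2) = -((z:ℂ)^2/(2*ν)) := by
      field_simp
    calc -((z:ℂ)/ν) * (Complex.Gamma (ν+1) * ((z:ℂ)/2 * ((((z:ℂ)/2)^2)^k) / ((k.factorial:ℂ) * Complex.Gamma (ν+(k:ℂ)+2))))
        = (-((z:ℂ)/ν) * ((z:ℂ)/2)) * (Complex.Gamma (ν+1) * ((((z:ℂ)/2)^2)^k) / ((k.factorial:ℂ) * Complex.Gamma (ν+(k:ℂ)+2))) := by
          ring
      _ = -((z:ℂ)^2/(2*ν)) * (Complex.Gamma (ν+1) * ((((z:ℂ)/2)^2)^k) / ((k.factorial:ℂ) * Complex.Gamma (ν+(k:ℂ)+2))) := by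
          rw [hzz2]
  -- split off k = 0
  have hc0 : c 0 = (ν+1)⁻¹ := by
    simp only [hc_def, pow_zero, Nat.factorial_zero, Nat.cast_one, Nat.cast_zero, one_mul,
      mul_one, add_zero]
    rw [show ν+2 = (ν+1)+1 by ring, Complex.Gamma_add_one _ hν1ne]
    field_simp
  have htsum_split : ∑' k, c k = (ν+1)⁻¹ + ∑' k, c (k+1) := by
    rw [Summable.tsum_eq_zero_add hcsum, hc0]
  -- bound on the tail
  have habsν : (0:ℝ) < Complex.abs ν := lt_of_lt_of_le one_pos hν1
  have htail_term : ∀ k : ℕ, ‖c (k+1)‖ ≤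
      (1 / Complex.abs ν ^ 2) * ((z^2/4)^(k+1)/((k+1).factorial : ℝ)) := by
    intro k
    rw [hcnorm]
    have hlb := aux_gamma_lb2 hνre (k := k)
    have harg : ν + ((k+1:ℕ):ℂ) + 2 = ν + (k:ℂ) + 3 := by push_cast; ring
    rw [harg]
    have h1 : Complex.abs ν ^ 2 * Complex.abs (Complex.Gamma (ν+1)) ≤
        Complex.abs (Complex.Gamma (ν + k + 3)) := hlb
    have hzz : ((z/2)^2 : ℝ) = z^2/4 := by ring
    rw [hzz]
    have hGpos : 0 < Complex.abs (Complex.Gamma (ν + (k:ℂ) + 3)) := by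
      have := hΓkpos (k+1)
      rwa [harg] at this
    have hrhs : (1 / Complex.abs ν ^ 2) * ((z^2/4)^(k+1)/((k+1).factorial : ℝ))
        = (z^2/4)^(k+1) / (Complex.abs ν ^ 2 * ((k+1).factorial : ℝ)) := by
      field_simp
    rw [hrhs, div_le_div_iff₀ (by positivity) (by positivity)]
    calc Complex.abs (Complex.Gamma (ν+1)) * (z^2/4)^(k+1) * (Complex.abs ν ^ 2 * ((k+1).factorial : ℝ))
        = (Complex.abs ν ^ 2 * Complex.abs (Complex.Gamma (ν+1))) * ((z^2/4)^(k+1) * ((k+1).factorial : ℝ)) := by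
          ring
      _ ≤ Complex.abs (Complex.Gamma (ν + k + 3)) * ((z^2/4)^(k+1) * ((k+1).factorial : ℝ)) := by
          apply mul_le_mul_of_nonneg_right h1 (by positivity)
      _ = (z^2/4)^(k+1) * (((k+1).factorial : ℝ) * Complex.abs (Complex.Gamma (ν + k + 3))) := by
          ring
  have hE'sum : Summable (fun k : ℕ => ((z^2/4)^(k+1)/((k+1).factorial : ℝ))) :=
    (Real.summable_pow_div_factorial (z^2/4)).comp_injective Nat.succ_injective
  have hE'nonneg : (0:ℝ) ≤ ∑' k:ℕ, ((z^2/4)^(k+1)/((k+1).factorial : ℝ)) :=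
    tsum_nonneg (fun k => by positivity)
  have hnormsum : Summable (fun k => ‖c (k+1)‖) :=
    Summable.of_nonneg_of_le (fun k => norm_nonneg _) htail_term (hE'sum.mul_left _)
  have htailbound : ‖∑' k, c (k+1)‖ ≤
      (1 / Complex.abs ν ^ 2) * ∑' k:ℕ, ((z^2/4)^(k+1)/((k+1).factorial : ℝ)) := by
    calc ‖∑' k, c (k+1)‖ ≤ ∑' k, ‖c (k+1)‖ := norm_tsum_le_tsum_norm hnormsum
      _ ≤ ∑' k:ℕ, (1 / Complex.abs ν ^ 2) * ((z^2/4)^(k+1)/((k+1).factorial : ℝ)) :=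
          Summable.tsum_le_tsum htail_term hnormsum (hE'sum.mul_left _)
      _ = (1 / Complex.abs ν ^ 2) * ∑' k:ℕ, ((z^2/4)^(k+1)/((k+1).factorial : ℝ)) :=
          tsum_mul_left
  rw [hkey, htsum_split]
  have hXeq : -((z:ℂ)^2/(2*ν))*((ν+1)⁻¹ + ∑' k, c (k+1)) + (z:ℂ)^2/(2*ν^2)
      = ((z:ℂ)^2/2) * (1/(ν^2*(ν+1)) - (∑' k, c (k+1))/ν) := by
    have hν2 : ν^2 ≠ 0 := pow_ne_zero _ hν0
    field_simp
    ring
  rw [hXeq, norm_mul]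
  have hzn : ‖((z:ℂ)^2/2 : ℂ)‖ = z^2/2 := by
    rw [norm_div, norm_pow]
    simp [Complex.norm_eq_abs, Complex.abs_ofReal, abs_of_pos hz, Complex.abs_two]
  have hνn : ‖(1/ν^3 : ℂ)‖ = 1/Complex.abs ν^3 := by
    rw [norm_div, norm_pow, norm_one, Complex.norm_eq_abs]
  rw [hzn, hνn]
  have habs1 : Complex.abs ν ≤ Complex.abs (ν+1) := by
    have := aux_abs_add_ge hνre (j := 1) one_pos.le
    simpa using this
  have hb1 : ‖(1/(ν^2*(ν+1)) : ℂ)‖ ≤ 1/Complex.abs ν^3 := by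
    rw [norm_div, norm_one, norm_mul, norm_pow, Complex.norm_eq_abs, Complex.norm_eq_abs]
    apply div_le_div_of_nonneg_left one_pos.le (by positivity)
    calc Complex.abs ν^3 = Complex.abs ν^2 * Complex.abs ν := by ring
      _ ≤ Complex.abs ν^2 * Complex.abs (ν+1) := by
          apply mul_le_mul_of_nonneg_left habs1 (by positivity)
  have hb2 : ‖((∑' k, c (k+1))/ν : ℂ)‖ ≤
      (∑' k:ℕ, ((z^2/4)^(k+1)/((k+1).factorial : ℝ)))/Complex.abs ν^3 := by
    rw [norm_div, Complex.norm_eq_abs]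
    calc ‖∑' k, c (k+1)‖ / Complex.abs ν
        ≤ ((1 / Complex.abs ν ^ 2) * ∑' k:ℕ, ((z^2/4)^(k+1)/((k+1).factorial : ℝ)))
            / Complex.abs ν := by
          apply div_le_div_of_nonneg_right htailbound habsν.le
      _ = (∑' k:ℕ, ((z^2/4)^(k+1)/((k+1).factorial : ℝ)))/Complex.abs ν^3 := by
          rw [one_div, inv_mul_eq_div, div_div, ← pow_succ]
  calc z^2/2 * ‖1/(ν^2*(ν+1)) - (∑' k, c (k+1))/ν‖
      ≤ z^2/2 * (‖(1/(ν^2*(ν+1)) : ℂ)‖ + ‖((∑' k, c (k+1))/ν : ℂ)‖) := by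
        apply mul_le_mul_of_nonneg_left (norm_sub_le _ _) (by positivity)
    _ ≤ z^2/2 * (1/Complex.abs ν^3 +
          (∑' k:ℕ, ((z^2/4)^(k+1)/((k+1).factorial : ℝ)))/Complex.abs ν^3) := by
        apply mul_le_mul_of_nonneg_left (add_le_add hb1 hb2) (by positivity)
    _ = z^2/2 * (1 + ∑' k:ℕ, ((z^2/4)^(k+1)/((k+1).factorial : ℝ))) * (1/Complex.abs ν^3) := by
        field_simp

/-- For fixed `z > 0`, with `R₁, R₃` defined by `I_ν(z) = (z/2)^ν (1+R₁)/Γ(1+ν)` and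
`I'_ν(z) = (ν/z)(z/2)^ν (1+R₃)/Γ(1+ν)`, one has
`R₁ - R₃ = -z²/(2ν²) + O(1/|ν|³)` as `|ν| → ∞` with `Re ν ≥ 0`. -/
theorem besselI_remainder_difference (z : ℝ) (hz : 0 < z) :
    ∃ R₁ R₃ : ℂ → ℂ,
      (∀ᶠ ν in Filter.comap (norm : ℂ → ℝ) Filter.atTop ⊓ 𝓟 {ν : ℂ | 0 ≤ ν.re},
        besselI ν z = ((z : ℂ) / 2) ^ ν * (1 + R₁ ν) / Complex.Gamma (1 + ν)) ∧
      (∀ᶠ ν in Filter.comap (norm : ℂ → ℝ) Filter.atTop ⊓ 𝓟 {ν : ℂ | 0 ≤ ν.re},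
        besselI' ν z = ν / z * ((z : ℂ) / 2) ^ ν * (1 + R₃ ν) / Complex.Gamma (1 + ν)) ∧
      (fun ν => R₁ ν - R₃ ν + (z : ℂ) ^ 2 / (2 * ν ^ 2))
        =O[Filter.comap (norm : ℂ → ℝ) Filter.atTop ⊓ 𝓟 {ν : ℂ | 0 ≤ ν.re}]
        (fun ν => 1 / ν ^ 3) := by
  have hzC : (z:ℂ) ≠ 0 := Complex.ofReal_ne_zero.mpr hz.ne'
  have hbne : ((z:ℂ)/2) ≠ 0 := by
    simp only [ne_eq, div_eq_zero_iff, Complex.ofReal_eq_zero]; push_neg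
    exact ⟨hz.ne', by norm_num⟩
  have hev : ∀ᶠ ν in Filter.comap (norm : ℂ → ℝ) Filter.atTop ⊓ 𝓟 {ν : ℂ | 0 ≤ ν.re},
      1 ≤ Complex.abs ν ∧ 0 ≤ ν.re := by
    have h1 : ∀ᶠ ν in Filter.comap Complex.abs Filter.atTop, 1 ≤ Complex.abs ν := by
      rw [eventually_comap]
      filter_upwards [eventually_ge_atTop 1] with b hb a ha
      rw [ha]; exact hb
    have h2 : ∀ᶠ ν in (𝓟 {ν : ℂ | 0 ≤ ν.re}), 0 ≤ ν.re :=
      eventually_principal.mpr (fun ν hν => hν)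
    exact (h1.filter_mono inf_le_left).and (h2.filter_mono inf_le_right)
  refine ⟨fun ν => Complex.Gamma (1+ν) * ((z:ℂ)/2)^(-ν) * besselI ν z - 1,
      fun ν => (z:ℂ)/ν * Complex.Gamma (1+ν) * ((z:ℂ)/2)^(-ν) * besselI' ν z - 1, ?_, ?_, ?_⟩
  · filter_upwards [hev] with ν hν
    obtain ⟨hν1, hνre⟩ := hν
    have hΓ : Complex.Gamma (1+ν) ≠ 0 :=
      Complex.Gamma_ne_zero_of_re_pos (by simp; linarith)
    have hp : ((z:ℂ)/2)^ν ≠ 0 := by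
      rw [Ne, Complex.cpow_eq_zero_iff]
      push_neg
      intro h; exact absurd h hbne
    rw [Complex.cpow_neg]
    field_simp
    ring
  · filter_upwards [hev] with ν hν
    obtain ⟨hν1, hνre⟩ := hν
    have hν0 : ν ≠ 0 := by
      intro h; rw [h] at hν1; simp at hν1; linarith
    have hΓ : Complex.Gamma (1+ν) ≠ 0 :=
      Complex.Gamma_ne_zero_of_re_pos (by simp; linarith)
    have hp : ((z:ℂ)/2)^ν ≠ 0 := by
      rw [Ne, Complex.cpow_eq_zero_iff]
      push_neg
      intro h; exact absurd h hbne
    rw [Complex.cpow_neg]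
    field_simp
    ring
  · rw [isBigO_iff]
    refine ⟨z^2/2 * (1 + (∑' k:ℕ, ((z^2/4)^(k+1)/((k+1).factorial : ℝ)))), ?_⟩
    filter_upwards [hev] with ν hν
    obtain ⟨hν1, hνre⟩ := hν
    have heq : Complex.Gamma (1+ν) * ((z:ℂ)/2)^(-ν) * besselI ν z - 1
        - ((z:ℂ)/ν * Complex.Gamma (1+ν) * ((z:ℂ)/2)^(-ν) * besselI' ν z - 1)
        + (z:ℂ)^2/(2*ν^2)
        = Complex.Gamma (1+ν) * ((z:ℂ)/2)^(-ν) * besselI ν z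
          - (z:ℂ)/ν * Complex.Gamma (1+ν) * ((z:ℂ)/2)^(-ν) * besselI' ν z
          + (z:ℂ)^2/(2*ν^2) := by ring
    rw [heq]
    exact aux_final hz hνre hν1
end

section
/- Let (λ_k)_{k ≥ k₀} be a sequence of complex numbers satisfying Re λ_k = π b · k / log k · (1 + O(log log k / log k)) and Im λ_k = O(1), for some b > 0. Then the counting function N(λ) = #{k : λ₀ ≤ Re λ_k ≤ λ} satisfies N(λ) = (λ log λ / (π b)) (1 + O(log log λ / log λ)) as λ → ∞. -/
open Filter Asymptotics

private lemma log_le_two_sqrt {x : ℝ} (hx : 0 < x) : Real.log x ≤ 2 * Real.sqrt x := by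
  have h := Real.log_le_sub_one_of_pos (Real.sqrt_pos.2 hx)
  have h2 : Real.log (Real.sqrt x) = Real.log x / 2 := Real.log_sqrt hx.le
  nlinarith [Real.sqrt_nonneg x]

private lemma tendsto_sqrt_atTop' : Tendsto Real.sqrt atTop atTop := by
  rw [tendsto_atTop]
  intro b
  filter_upwards [eventually_ge_atTop (b ^ 2)] with x h1
  calc b ≤ |b| := le_abs_self b
    _ = Real.sqrt (b ^ 2) := (Real.sqrt_sq_eq_abs b).symm
    _ ≤ Real.sqrt x := Real.sqrt_le_sqrt h1

set_option maxHeartbeats 1000000 in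
private lemma final_step (P c : ℝ) (hP : 0 < P) (hc1 : 1 ≤ c)
    (k₀ k₁ : ℕ) (hk₁0 : k₀ ≤ k₁) (lam : ℕ → ℂ) (lam₀ : ℝ)
    (hlam0 : ∀ k : ℕ, k₁ ≤ k → lam₀ ≤ (lam k).re)
    (claimUp : ∀ᶠ t : ℝ in atTop, ∀ k : ℕ, k₁ ≤ k → (lam k).re ≤ t →
      (k : ℝ) ≤ t * Real.log t / P * (1 + 30 * c * (Real.log (Real.log t) / Real.log t)))
    (claimLow : ∀ᶠ t : ℝ in atTop, ∀ k : ℕ, k₁ ≤ k →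
      (k : ℝ) ≤ t * Real.log t / P * (1 - 3 * c * (Real.log (Real.log t) / Real.log t)) →
      (lam k).re ≤ t) :
    ∃ E : ℝ → ℝ,
      (∀ᶠ t in atTop,
        ((Set.ncard {k : ℕ | k₀ ≤ k ∧ lam₀ ≤ (lam k).re ∧ (lam k).re ≤ t} : ℝ))
          = t * Real.log t / P * (1 + E t)) ∧
      E =O[atTop] fun t => Real.log (Real.log t) / Real.log t := by
  have hc0 : (0 : ℝ) < c := lt_of_lt_of_le one_pos hc1
  have hu0' : Tendsto (fun s : ℝ => Real.log s / s) atTop (nhds 0) :=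
    Real.isLittleO_log_id_atTop.tendsto_div_nhds_zero
  have hlogT : Tendsto Real.log atTop atTop := Real.tendsto_log_atTop
  have hloglogT : Tendsto (fun t : ℝ => Real.log (Real.log t)) atTop atTop :=
    hlogT.comp hlogT
  have huR : Tendsto (fun t : ℝ => Real.log (Real.log t) / Real.log t) atTop (nhds 0) :=
    hu0'.comp hlogT
  have hGT : Tendsto (fun t : ℝ => t * Real.log t / P) atTop atTop :=
    (tendsto_id.atTop_mul_atTop₀ hlogT).atTop_div_const hP
  have hGuT : Tendsto (fun t : ℝ => t * Real.log (Real.log t) / P) atTop atTop :=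
    (tendsto_id.atTop_mul_atTop₀ hloglogT).atTop_div_const hP
  have e3cu : ∀ᶠ t : ℝ in atTop, 3 * c * (Real.log (Real.log t) / Real.log t) ≤ 1 / 2 := by
    have h := huR.const_mul (3 * c)
    rw [mul_zero] at h
    exact h.eventually_le_const (by norm_num)
  have hSand : ∀ᶠ t : ℝ in atTop,
      (0 < t * Real.log t / P) ∧ (0 ≤ Real.log (Real.log t) / Real.log t) ∧
      t * Real.log t / P * (1 - (3 * c + 1) * (Real.log (Real.log t) / Real.log t))
        ≤ ((Set.ncard {k : ℕ | k₀ ≤ k ∧ lam₀ ≤ (lam k).re ∧ (lam k).re ≤ t} : ℕ) : ℝ) ∧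
      ((Set.ncard {k : ℕ | k₀ ≤ k ∧ lam₀ ≤ (lam k).re ∧ (lam k).re ≤ t} : ℕ) : ℝ)
        ≤ t * Real.log t / P * (1 + (30 * c + 1) * (Real.log (Real.log t) / Real.log t)) := by
    filter_upwards [claimUp, claimLow, hGT.eventually_ge_atTop (2 * ((k₁ : ℝ) + 1)),
      hGuT.eventually_ge_atTop ((k₁ : ℝ) + 2), e3cu,
      hlogT.eventually_ge_atTop 1, hloglogT.eventually_ge_atTop 0,
      eventually_ge_atTop (1 : ℝ)] with t hup hlow hG2 hGu2 h3cu hLt1 hLL0 ht1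
    set u := Real.log (Real.log t) / Real.log t with hu_def
    have hLt0 : (0 : ℝ) < Real.log t := by linarith
    have ht0 : (0 : ℝ) < t := by linarith
    have hu0 : 0 ≤ u := div_nonneg hLL0 hLt0.le
    have hGt0 : (0 : ℝ) < t * Real.log t / P := by positivity
    have hGu : (k₁ : ℝ) + 2 ≤ t * Real.log t / P * u := by
      have hGuEq : t * Real.log t / P * u = t * Real.log (Real.log t) / P := by
        rw [hu_def]; field_simp
      rw [hGuEq]; exact hGu2
    set S := {k : ℕ | k₀ ≤ k ∧ lam₀ ≤ (lam k).re ∧ (lam k).re ≤ t} with hS_def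
    set X := t * Real.log t / P * (1 + 30 * c * u) with hX_def
    set Y := t * Real.log t / P * (1 - 3 * c * u) with hY_def
    have h3cu0 : (0 : ℝ) ≤ 3 * c * u := by positivity
    have hX0 : 0 ≤ X := by
      rw [hX_def]; positivity
    have hY1 : (k₁ : ℝ) + 1 ≤ Y := by
      rw [hY_def]
      nlinarith [mul_nonneg hGt0.le (by linarith : (0:ℝ) ≤ 1 / 2 - 3 * c * u)]
    have hY0 : (0 : ℝ) ≤ Y := by
      have : (0:ℝ) ≤ (k₁ : ℝ) + 1 := by positivity
      linarith
    have hsub : S ⊆ ↑(Finset.range (k₁ + ⌈X⌉₊ + 1)) := by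
      intro k hkS
      simp only [hS_def, Set.mem_setOf_eq] at hkS
      simp only [Finset.coe_range, Set.mem_Iio]
      rcases le_or_gt k k₁ with h | h
      · omega
      · have h2 : (k : ℝ) ≤ X := hX_def ▸ hup k h.le hkS.2.2
        have h3 : k ≤ ⌈X⌉₊ := by
          exact_mod_cast le_trans h2 (Nat.le_ceil X)
        omega
    have hfin : S.Finite := Set.Finite.subset (Finset.range _).finite_toSet hsub
    have hcardUp : S.ncard ≤ k₁ + ⌈X⌉₊ + 1 := by
      calc S.ncard ≤ (↑(Finset.range (k₁ + ⌈X⌉₊ + 1)) : Set ℕ).ncard :=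
            Set.ncard_le_ncard hsub (Finset.range _).finite_toSet
        _ = k₁ + ⌈X⌉₊ + 1 := by rw [Set.ncard_coe_finset, Finset.card_range]
    set M := ⌊Y⌋₊ with hM_def
    have hMk : k₁ + 1 ≤ M := Nat.le_floor (by push_cast; linarith)
    have hsub2 : ↑(Finset.Icc k₁ M) ⊆ S := by
      intro k hkI
      simp only [Finset.coe_Icc, Set.mem_Icc] at hkI
      have hkY : (k : ℝ) ≤ Y := by
        calc (k : ℝ) ≤ (M : ℝ) := by exact_mod_cast hkI.2
          _ ≤ Y := Nat.floor_le hY0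
      exact ⟨le_trans hk₁0 hkI.1, hlam0 k hkI.1, hlow k hkI.1 (hY_def ▸ hkY)⟩
    have hcardLow : M + 1 - k₁ ≤ S.ncard := by
      have := Set.ncard_le_ncard hsub2 hfin
      rwa [Set.ncard_coe_finset, Nat.card_Icc] at this
    refine ⟨hGt0, hu0, ?_, ?_⟩
    · have h1 : Y < (M : ℝ) + 1 := Nat.lt_floor_add_one Y
      have h2 : ((M + 1 - k₁ : ℕ) : ℝ) ≤ (S.ncard : ℝ) := by exact_mod_cast hcardLow
      have hk : k₁ ≤ M + 1 := by omega
      have h3 : ((M + 1 - k₁ : ℕ) : ℝ) = (M : ℝ) + 1 - (k₁ : ℝ) := by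
        rw [Nat.cast_sub hk]; push_cast; ring
      rw [h3] at h2
      have h4 : t * Real.log t / P * (1 - (3 * c + 1) * u) ≤ Y - (k₁ : ℝ) := by
        rw [hY_def]
        nlinarith [hGu]
      linarith
    · have h1 : (⌈X⌉₊ : ℝ) < X + 1 := Nat.ceil_lt_add_one hX0
      have h2 : (S.ncard : ℝ) ≤ (k₁ : ℝ) + (⌈X⌉₊ : ℝ) + 1 := by exact_mod_cast hcardUp
      have h3 : (k₁ : ℝ) + X + 2 ≤ t * Real.log t / P * (1 + (30 * c + 1) * u) := by
        rw [hX_def]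
        nlinarith [hGu]
      linarith
  refine ⟨fun t =>
      ((Set.ncard {k : ℕ | k₀ ≤ k ∧ lam₀ ≤ (lam k).re ∧ (lam k).re ≤ t} : ℕ) : ℝ)
        / (t * Real.log t / P) - 1, ?_, ?_⟩
  · filter_upwards [hSand] with t ht
    obtain ⟨hGt0, -, -, -⟩ := ht
    have hne : t * Real.log t / P ≠ 0 := ne_of_gt hGt0
    have h1 : 1 + (((Set.ncard {k : ℕ | k₀ ≤ k ∧ lam₀ ≤ (lam k).re ∧ (lam k).re ≤ t} : ℕ) : ℝ)
        / (t * Real.log t / P) - 1)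
        = ((Set.ncard {k : ℕ | k₀ ≤ k ∧ lam₀ ≤ (lam k).re ∧ (lam k).re ≤ t} : ℕ) : ℝ)
        / (t * Real.log t / P) := by ring
    rw [h1, mul_div_cancel₀ _ hne]
  · rw [isBigO_iff]
    refine ⟨31 * c, ?_⟩
    filter_upwards [hSand] with t ht
    obtain ⟨hGt0, hu0, hl, hu⟩ := ht
    rw [Real.norm_eq_abs, Real.norm_eq_abs, abs_of_nonneg hu0]
    have hE : ((Set.ncard {k : ℕ | k₀ ≤ k ∧ lam₀ ≤ (lam k).re ∧ (lam k).re ≤ t} : ℕ) : ℝ)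
          / (t * Real.log t / P) - 1
        = (((Set.ncard {k : ℕ | k₀ ≤ k ∧ lam₀ ≤ (lam k).re ∧ (lam k).re ≤ t} : ℕ) : ℝ)
          - t * Real.log t / P) / (t * Real.log t / P) := by
      rw [sub_div, div_self (ne_of_gt hGt0)]
    rw [hE, abs_div, abs_of_pos hGt0, div_le_iff₀ hGt0, abs_sub_le_iff]
    constructor
    · nlinarith [mul_nonneg (mul_nonneg hu0 hGt0.le) (by linarith : (0:ℝ) ≤ c - 1)]
    · nlinarith [mul_nonneg (mul_nonneg hu0 hGt0.le) (by linarith : (0:ℝ) ≤ 28 * c - 1)]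

set_option maxHeartbeats 4000000 in
/-- If `Re λ_k = π b k / log k (1 + O(log log k / log k))` and `Im λ_k = O(1)`, then
the counting function `N(t) = #{k : λ₀ ≤ Re λ_k ≤ t}` satisfies
`N(t) = (t log t / (π b)) (1 + O(log log t / log t))` as `t → ∞`. -/
theorem resonance_counting (b : ℝ) (hb : 0 < b) (k₀ : ℕ) (lam : ℕ → ℂ) (lam₀ : ℝ)
    (r : ℕ → ℝ)
    (hre : ∀ k ≥ k₀, (lam k).re = Real.pi * b * k / Real.log k * (1 + r k))
    (hr : r =O[atTop] fun k => Real.log (Real.log k) / Real.log k)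
    (him : ∃ C : ℝ, ∀ k ≥ k₀, |(lam k).im| ≤ C) :
    ∃ E : ℝ → ℝ,
      (∀ᶠ t in atTop,
        ((Set.ncard {k : ℕ | k₀ ≤ k ∧ lam₀ ≤ (lam k).re ∧ (lam k).re ≤ t} : ℝ))
          = t * Real.log t / (Real.pi * b) * (1 + E t)) ∧
      E =O[atTop] fun t => Real.log (Real.log t) / Real.log t := by
  clear him
  set P := Real.pi * b with hPdef
  have hP : 0 < P := mul_pos Real.pi_pos hb
  obtain ⟨C, hC⟩ := isBigO_iff.mp hr
  set c := max C 1 with hcdef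
  have hc1 : (1 : ℝ) ≤ c := le_max_right _ _
  have hc0 : (0 : ℝ) < c := lt_of_lt_of_le one_pos hc1
  -- basic tendsto facts
  have hu0' : Tendsto (fun s : ℝ => Real.log s / s) atTop (nhds 0) :=
    Real.isLittleO_log_id_atTop.tendsto_div_nhds_zero
  have hlogT : Tendsto Real.log atTop atTop := Real.tendsto_log_atTop
  have hloglogT : Tendsto (fun t : ℝ => Real.log (Real.log t)) atTop atTop :=
    hlogT.comp hlogT
  have huR : Tendsto (fun t : ℝ => Real.log (Real.log t) / Real.log t) atTop (nhds 0) :=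
    hu0'.comp hlogT
  have huN : Tendsto (fun k : ℕ => Real.log (Real.log k) / Real.log k) atTop (nhds 0) :=
    huR.comp tendsto_natCast_atTop_atTop
  have hGT : Tendsto (fun t : ℝ => t * Real.log t / P) atTop atTop :=
    (tendsto_id.atTop_mul_atTop₀ hlogT).atTop_div_const hP
  have hGuT : Tendsto (fun t : ℝ => t * Real.log (Real.log t) / P) atTop atTop :=
    (tendsto_id.atTop_mul_atTop₀ hloglogT).atTop_div_const hP
  -- choose k₁
  have ev2 : ∀ᶠ k : ℕ in atTop, c * (Real.log (Real.log k) / Real.log k) ≤ 1 / 2 := by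
    have h := huN.const_mul c
    rw [mul_zero] at h
    exact h.eventually_le_const (by norm_num)
  have hgN : Tendsto (fun k : ℕ => P * k / Real.log k) atTop atTop := by
    refine tendsto_atTop_mono' atTop (f₁ := fun k : ℕ => Real.sqrt k * (P / 2)) ?_ ?_
    · filter_upwards [eventually_ge_atTop 3] with k hk
      have hk3 : (3 : ℝ) ≤ (k : ℝ) := by exact_mod_cast hk
      have hk0 : (0 : ℝ) < k := by linarith
      have hlk : Real.log (k : ℝ) ≤ 2 * Real.sqrt k := log_le_two_sqrt hk0
      have hlk0 : 0 < Real.log (k : ℝ) := Real.log_pos (by linarith)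
      have hs : Real.sqrt k * Real.sqrt k = (k : ℝ) := Real.mul_self_sqrt hk0.le
      rw [le_div_iff₀ hlk0]
      nlinarith [mul_nonneg (mul_nonneg (Real.sqrt_nonneg (k:ℝ)) (by positivity : (0:ℝ) ≤ P / 2))
        (by linarith : (0:ℝ) ≤ 2 * Real.sqrt (k:ℝ) - Real.log (k:ℝ))]
    · exact Tendsto.atTop_mul_const (by positivity)
        (tendsto_sqrt_atTop'.comp tendsto_natCast_atTop_atTop)
  have ev3 : ∀ᶠ k : ℕ in atTop, 2 * lam₀ ≤ P * k / Real.log k :=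
    hgN.eventually_ge_atTop _
  obtain ⟨k₁', hk₁'⟩ := eventually_atTop.mp (hC.and (ev2.and ev3))
  set k₁ := max k₁' (max k₀ 3) with hk₁def
  have hk₁0 : k₀ ≤ k₁ := le_trans (le_max_left _ _) (le_max_right _ _)
  have hk₁3 : 3 ≤ k₁ := le_trans (le_max_right _ _) (le_max_right _ _)
  -- the key per-k bundle
  have key : ∀ k : ℕ, k₁ ≤ k →
      1 ≤ Real.log k ∧ 0 ≤ Real.log (Real.log k) ∧
      c * (Real.log (Real.log k) / Real.log k) ≤ 1 / 2 ∧
      lam₀ ≤ (lam k).re ∧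
      P * k / Real.log k * (1 - c * (Real.log (Real.log k) / Real.log k)) ≤ (lam k).re ∧
      (lam k).re ≤ P * k / Real.log k * (1 + c * (Real.log (Real.log k) / Real.log k)) := by
    intro k hk
    obtain ⟨h1, h2, h3⟩ := hk₁' k (le_trans (le_max_left _ _) hk)
    have hk3 : (3 : ℝ) ≤ (k : ℝ) := by exact_mod_cast le_trans hk₁3 hk
    have hlk : 1 ≤ Real.log (k : ℝ) := by
      have hm := Real.log_le_log (by norm_num : (0:ℝ) < 3) hk3
      have h3' : (1 : ℝ) < Real.log 3 := by
        rw [show (1 : ℝ) = Real.log (Real.exp 1) by simp]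
        exact Real.log_lt_log (Real.exp_pos 1) (by nlinarith [Real.exp_one_lt_d9])
      linarith
    have hlk0 : (0 : ℝ) < Real.log k := by linarith
    have hllk : 0 ≤ Real.log (Real.log (k : ℝ)) := Real.log_nonneg hlk
    have hg0 : 0 ≤ P * k / Real.log k := by positivity
    have hrk : |r k| ≤ c * (Real.log (Real.log k) / Real.log k) := by
      have hn : ‖Real.log (Real.log (k:ℝ)) / Real.log (k:ℝ)‖
          = Real.log (Real.log (k:ℝ)) / Real.log (k:ℝ) := by
        rw [Real.norm_eq_abs, abs_of_nonneg (div_nonneg hllk hlk0.le)]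
      rw [Real.norm_eq_abs, hn] at h1
      calc |r k| ≤ C * (Real.log (Real.log (k:ℝ)) / Real.log (k:ℝ)) := h1
        _ ≤ c * (Real.log (Real.log (k:ℝ)) / Real.log (k:ℝ)) :=
          mul_le_mul_of_nonneg_right (le_max_left _ _) (div_nonneg hllk hlk0.le)
    have hre' := hre k (le_trans hk₁0 hk)
    have hub : (lam k).re ≤ P * k / Real.log k * (1 + c * (Real.log (Real.log k) / Real.log k)) := by
      rw [hre']
      apply mul_le_mul_of_nonneg_left _ hg0
      have := le_abs_self (r k); linarith
    have hlb : P * k / Real.log k * (1 - c * (Real.log (Real.log k) / Real.log k)) ≤ (lam k).re := by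
      rw [hre']
      apply mul_le_mul_of_nonneg_left _ hg0
      have := neg_abs_le (r k); linarith
    have hlam0 : lam₀ ≤ (lam k).re := by
      have h12 : P * k / Real.log k * (1 / 2)
          ≤ P * k / Real.log k * (1 - c * (Real.log (Real.log k) / Real.log k)) :=
        mul_le_mul_of_nonneg_left (by linarith) hg0
      linarith
    exact ⟨hlk, hllk, h2, hlam0, hlb, hub⟩
  -- claim: upper bound on k from Re λ_k ≤ t
  have claimUp : ∀ᶠ t : ℝ in atTop, ∀ k : ℕ, k₁ ≤ k → (lam k).re ≤ t →
      (k : ℝ) ≤ t * Real.log t / P * (1 + 30 * c * (Real.log (Real.log t) / Real.log t)) := by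
    have ehalf : ∀ᶠ t : ℝ in atTop, Real.log (Real.log t) / Real.log t ≤ 1 / 2 :=
      huR.eventually_le_const (by norm_num)
    filter_upwards [eventually_ge_atTop (1 : ℝ),
      hlogT.eventually_ge_atTop (2 * Real.log (4 / P)),
      hloglogT.eventually_ge_atTop (Real.log (6 / P)),
      hlogT.eventually_ge_atTop (max 2 P),
      hloglogT.eventually_ge_atTop (max (Real.log 2) 0),
      ehalf] with t ht1 he2 he3 he4 he5 he6
    set u := Real.log (Real.log t) / Real.log t with hu_def
    have ht0 : (0 : ℝ) < t := by linarith
    have hLt0 : (0 : ℝ) < Real.log t := lt_of_lt_of_le (by norm_num) (le_trans (le_max_left 2 P) he4)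
    have hLt2 : (2 : ℝ) ≤ Real.log t := le_trans (le_max_left 2 P) he4
    have hLtP : P ≤ Real.log t := le_trans (le_max_right 2 P) he4
    have hLLt0 : (0 : ℝ) ≤ Real.log (Real.log t) := le_trans (le_max_right (Real.log 2) 0) he5
    have hlog2 : Real.log 2 ≤ Real.log (Real.log t) := le_trans (le_max_left (Real.log 2) 0) he5
    have h2LL : 2 * Real.log (Real.log t) ≤ Real.log t := by
      have := (div_le_iff₀ hLt0).1 he6
      linarith
    have hu0 : (0 : ℝ) ≤ u := div_nonneg hLLt0 hLt0.le
    have hu1 : u ≤ 1 := by rw [hu_def, div_le_one hLt0]; linarith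
    have hLLeq : Real.log (Real.log t) = u * Real.log t := by
      rw [hu_def]; field_simp
    intro k hk hret
    obtain ⟨hlk, hllk, hε2, -, hlb, -⟩ := key k hk
    have hk3 : (3 : ℝ) ≤ (k : ℝ) := by exact_mod_cast le_trans hk₁3 hk
    have hkpos : (0 : ℝ) < k := by linarith
    have hlk0 : (0 : ℝ) < Real.log k := by linarith
    have hε0 : 0 ≤ c * (Real.log (Real.log (k:ℝ)) / Real.log (k:ℝ)) :=
      mul_nonneg hc0.le (div_nonneg hllk hlk0.le)
    have hg0 : 0 ≤ P * (k:ℝ) / Real.log k := by positivity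
    have hPk0 : (0:ℝ) ≤ P * k := by positivity
    -- g ≤ 2t in multiplied form
    have hg2t : P * (k : ℝ) ≤ 2 * t * Real.log k := by
      have h1 : P * (k:ℝ) / Real.log k * (1 / 2) ≤ t := by
        have h2 : P * (k:ℝ) / Real.log k * (1/2)
            ≤ P * (k:ℝ) / Real.log k * (1 - c * (Real.log (Real.log (k:ℝ)) / Real.log (k:ℝ))) :=
          mul_le_mul_of_nonneg_left (by linarith) hg0
        linarith
      rw [div_mul_eq_mul_div, div_le_iff₀ hlk0] at h1
      linarith
    have hs : Real.sqrt k * Real.sqrt k = (k : ℝ) := Real.mul_self_sqrt hkpos.le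
    have hsk : (1 : ℝ) ≤ Real.sqrt k := by
      nlinarith [Real.sqrt_nonneg (k : ℝ)]
    have hlog2s : Real.log (k:ℝ) ≤ 2 * Real.sqrt k := log_le_two_sqrt hkpos
    have hPk4 : P * (k : ℝ) ≤ 4 * t * Real.sqrt k := by
      have hp1 : (0:ℝ) ≤ 2 * t * (2 * Real.sqrt (k:ℝ) - Real.log (k:ℝ)) :=
        mul_nonneg (by linarith) (by linarith)
      linarith [hp1]
    have hsq : Real.sqrt k * P ≤ 4 * t := by
      have h6 : P * Real.sqrt (k:ℝ) * Real.sqrt (k:ℝ) ≤ 4 * t * Real.sqrt (k:ℝ) := by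
        calc P * Real.sqrt (k:ℝ) * Real.sqrt (k:ℝ) = P * (k:ℝ) := by rw [mul_assoc, hs]
          _ ≤ 4 * t * Real.sqrt (k:ℝ) := hPk4
      have h7 := le_of_mul_le_mul_right h6 (by linarith : (0:ℝ) < Real.sqrt (k:ℝ))
      linarith
    have hk16 : (k : ℝ) ≤ 4 * t / P * (4 * t / P) := by
      have hsq' : Real.sqrt (k:ℝ) ≤ 4 * t / P := by rw [le_div_iff₀ hP]; linarith
      have := mul_le_mul hsq' hsq' (Real.sqrt_nonneg _) (by positivity)
      linarith [hs ▸ this]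
    have hlkb : Real.log (k:ℝ) ≤ 3 * Real.log t := by
      have h1 : Real.log (k:ℝ) ≤ Real.log (4 * t / P * (4 * t / P)) := Real.log_le_log hkpos hk16
      have h2 : Real.log (4 * t / P) = Real.log (4 / P) + Real.log t := by
        rw [show 4 * t / P = 4 / P * t by ring, Real.log_mul (by positivity) (ne_of_gt ht0)]
      rw [Real.log_mul (by positivity) (by positivity), h2] at h1
      linarith
    have hk6 : P * (k : ℝ) ≤ 6 * t * Real.log t := by
      have hp1 : (0:ℝ) ≤ 2 * t * (3 * Real.log t - Real.log (k:ℝ)) :=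
        mul_nonneg (by linarith) (by linarith)
      linarith [hp1]
    have hlkb2 : Real.log (k:ℝ) ≤ Real.log t + 2 * Real.log (Real.log t) := by
      have hk6' : (k : ℝ) ≤ 6 / P * t * Real.log t := by
        rw [show 6 / P * t * Real.log t = 6 * t * Real.log t / P by ring, le_div_iff₀ hP]
        linarith
      have h1 : Real.log (k:ℝ) ≤ Real.log (6 / P * t * Real.log t) := Real.log_le_log hkpos hk6'
      rw [Real.log_mul (by positivity) (ne_of_gt hLt0),
        Real.log_mul (by positivity) (ne_of_gt ht0)] at h1
      linarith
    rcases le_or_gt (k : ℝ) (Real.sqrt t) with hcase | hcase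
    · -- k ≤ √t : trivial
      have hstt : Real.sqrt t * Real.sqrt t = t := Real.mul_self_sqrt (by linarith)
      have h1 : Real.sqrt t ≤ t := by nlinarith [sq_nonneg (Real.sqrt t - 1)]
      have h2 : t ≤ t * Real.log t / P := by
        rw [le_div_iff₀ hP]
        nlinarith
      have h3 : (0:ℝ) ≤ t * Real.log t / P := by positivity
      nlinarith [mul_nonneg h3 (mul_nonneg (by positivity : (0:ℝ) ≤ 30 * c) hu0)]
    · -- √t < k
      have hsqt0 : (0 : ℝ) < Real.sqrt t := Real.sqrt_pos.2 ht0
      have hlkt : Real.log t / 2 ≤ Real.log (k:ℝ) := by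
        have h1 := Real.log_le_log hsqt0 hcase.le
        rwa [Real.log_sqrt ht0.le] at h1
      have hllkb : Real.log (Real.log (k:ℝ)) ≤ 2 * Real.log (Real.log t) := by
        have h1 : Real.log (Real.log (k:ℝ)) ≤ Real.log (2 * Real.log t) :=
          Real.log_le_log hlk0 (by linarith)
        rw [Real.log_mul two_ne_zero (ne_of_gt hLt0)] at h1
        linarith
      have hεu : c * (Real.log (Real.log (k:ℝ)) / Real.log (k:ℝ)) ≤ 4 * c * u := by
        have h1 : Real.log (Real.log (k:ℝ)) / Real.log (k:ℝ)
            ≤ 2 * Real.log (Real.log t) / (Real.log t / 2) :=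
          div_le_div₀ (by linarith) hllkb (by linarith) hlkt
        have h2 : 2 * Real.log (Real.log t) / (Real.log t / 2) = 4 * u := by
          rw [hu_def]; field_simp; ring
        rw [h2] at h1
        calc c * (Real.log (Real.log (k:ℝ)) / Real.log (k:ℝ)) ≤ c * (4 * u) :=
            mul_le_mul_of_nonneg_left h1 hc0.le
          _ = 4 * c * u := by ring
      -- main chain
      rw [div_mul_eq_mul_div, div_le_iff₀ hlk0] at hlb
      have hA : P * (k:ℝ) * (1 - c * (Real.log (Real.log (k:ℝ)) / Real.log (k:ℝ)))
          ≤ t * (Real.log t + 2 * Real.log (Real.log t)) := by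
        calc P * (k:ℝ) * (1 - c * (Real.log (Real.log (k:ℝ)) / Real.log (k:ℝ)))
            ≤ (lam k).re * Real.log (k:ℝ) := hlb
          _ ≤ t * Real.log (k:ℝ) := mul_le_mul_of_nonneg_right hret hlk0.le
          _ ≤ t * (Real.log t + 2 * Real.log (Real.log t)) :=
            mul_le_mul_of_nonneg_left hlkb2 ht0.le
      have hB : P * (k:ℝ) ≤ t * (Real.log t + 2 * Real.log (Real.log t)) * (1 + 8 * c * u) := by
        set ε := c * (Real.log (Real.log (k:ℝ)) / Real.log (k:ℝ)) with hεdef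
        have h2 := mul_le_mul_of_nonneg_right hA (by linarith : (0:ℝ) ≤ 1 + 2 * ε)
        have h3 : P * (k:ℝ) ≤ P * (k:ℝ) * (1 - ε) * (1 + 2 * ε) := by
          nlinarith [mul_nonneg hPk0 (mul_nonneg hε0 (by linarith : (0:ℝ) ≤ 1 - 2 * ε))]
        have h4 : t * (Real.log t + 2 * Real.log (Real.log t)) * (1 + 2 * ε)
            ≤ t * (Real.log t + 2 * Real.log (Real.log t)) * (1 + 8 * c * u) := by
          apply mul_le_mul_of_nonneg_left (by linarith) (by positivity)
        linarith
      rw [div_mul_eq_mul_div, le_div_iff₀ hP]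
      have hfac : (1 + 2 * u) * (1 + 8 * c * u) ≤ 1 + 30 * c * u := by
        nlinarith [mul_nonneg hu0 (sub_nonneg.2 hc1),
          mul_nonneg (mul_nonneg hc0.le hu0) (sub_nonneg.2 hu1)]
      have hX : t * (Real.log t + 2 * Real.log (Real.log t)) * (1 + 8 * c * u)
          ≤ t * Real.log t * (1 + 30 * c * u) := by
        calc t * (Real.log t + 2 * Real.log (Real.log t)) * (1 + 8 * c * u)
            = t * Real.log t * ((1 + 2 * u) * (1 + 8 * c * u)) := by rw [hLLeq]; ring
          _ ≤ t * Real.log t * (1 + 30 * c * u) :=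
            mul_le_mul_of_nonneg_left hfac (by positivity)
      linarith
  -- claim: lower bound, all small k are counted
  have claimLow : ∀ᶠ t : ℝ in atTop, ∀ k : ℕ, k₁ ≤ k →
      (k : ℝ) ≤ t * Real.log t / P * (1 - 3 * c * (Real.log (Real.log t) / Real.log t)) →
      (lam k).re ≤ t := by
    have e3cu : ∀ᶠ t : ℝ in atTop, 3 * c * (Real.log (Real.log t) / Real.log t) ≤ 1 / 2 := by
      have h := huR.const_mul (3 * c)
      rw [mul_zero] at h
      exact h.eventually_le_const (by norm_num)
    have eLtPt : ∀ᶠ t : ℝ in atTop, Real.log t ≤ P * t := by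
      filter_upwards [hu0'.eventually_le_const hP, eventually_gt_atTop (0:ℝ)] with t h1 h2
      calc Real.log t = Real.log t / t * t := by field_simp
        _ ≤ P * t := mul_le_mul_of_nonneg_right h1 h2.le
    have esqt : ∀ᶠ t : ℝ in atTop, 3 / 2 * P * Real.sqrt t ≤ t := by
      filter_upwards [eventually_ge_atTop ((3 / 2 * P) ^ 2), eventually_ge_atTop (1:ℝ)] with t h1 h2
      have h3 : Real.sqrt ((3 / 2 * P) ^ 2) ≤ Real.sqrt t := Real.sqrt_le_sqrt h1
      rw [Real.sqrt_sq (by positivity)] at h3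
      have h4 : Real.sqrt t * Real.sqrt t = t := Real.mul_self_sqrt (by linarith)
      nlinarith [Real.sqrt_nonneg t]
    filter_upwards [eventually_ge_atTop (1 : ℝ),
      hlogT.eventually_ge_atTop (max (3 * P) 2),
      hloglogT.eventually_ge_atTop (max (Real.log 2) 0),
      e3cu, eLtPt, esqt] with t ht1 he4 he5 he3cu heLtPt hesqt
    set u := Real.log (Real.log t) / Real.log t with hu_def
    have ht0 : (0 : ℝ) < t := by linarith
    have hLt0 : (0 : ℝ) < Real.log t := lt_of_lt_of_le (by norm_num) (le_trans (le_max_right (3*P) 2) he4)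
    have hLt2 : (2 : ℝ) ≤ Real.log t := le_trans (le_max_right (3*P) 2) he4
    have hLt3P : 3 * P ≤ Real.log t := le_trans (le_max_left (3*P) 2) he4
    have hLLt0 : (0 : ℝ) ≤ Real.log (Real.log t) := le_trans (le_max_right (Real.log 2) 0) he5
    have hlog2 : Real.log 2 ≤ Real.log (Real.log t) := le_trans (le_max_left (Real.log 2) 0) he5
    have hu0 : (0 : ℝ) ≤ u := div_nonneg hLLt0 hLt0.le
    have hLLeq : Real.log (Real.log t) = u * Real.log t := by
      rw [hu_def]; field_simp
    intro k hk hkle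
    obtain ⟨hlk, hllk, hε2, -, hlb, hub⟩ := key k hk
    have hk3 : (3 : ℝ) ≤ (k : ℝ) := by exact_mod_cast le_trans hk₁3 hk
    have hkpos : (0 : ℝ) < k := by linarith
    have hlk0 : (0 : ℝ) < Real.log k := by linarith
    have hε0 : 0 ≤ c * (Real.log (Real.log (k:ℝ)) / Real.log (k:ℝ)) :=
      mul_nonneg hc0.le (div_nonneg hllk hlk0.le)
    have hg0 : 0 ≤ P * (k:ℝ) / Real.log k := by positivity
    have hPk0 : (0:ℝ) ≤ P * k := by positivity
    have hre0 : 0 ≤ (lam k).re :=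
      le_trans (mul_nonneg hg0 (by linarith)) hlb
    -- multiplied form of the upper bound on re
    have hub' : (lam k).re * Real.log (k:ℝ)
        ≤ P * (k:ℝ) * (1 + c * (Real.log (Real.log (k:ℝ)) / Real.log (k:ℝ))) := by
      rw [div_mul_eq_mul_div] at hub
      exact (le_div_iff₀ hlk0).1 hub
    rcases le_or_gt (k : ℝ) (Real.sqrt t) with hcase | hcase
    · -- k ≤ √t
      have h1 : (lam k).re ≤ (lam k).re * Real.log (k:ℝ) := by
        nlinarith [mul_nonneg hre0 (by linarith : (0:ℝ) ≤ Real.log (k:ℝ) - 1)]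
      have h2 : (1 + c * (Real.log (Real.log (k:ℝ)) / Real.log (k:ℝ))) * (P * (k:ℝ))
          ≤ 3 / 2 * (P * (k:ℝ)) := by
        nlinarith [mul_nonneg hPk0 (by linarith : (0:ℝ) ≤ 1 / 2 -
          c * (Real.log (Real.log (k:ℝ)) / Real.log (k:ℝ)))]
      have h3 : 3 / 2 * (P * (k:ℝ)) ≤ 3 / 2 * (P * Real.sqrt t) := by
        nlinarith [mul_nonneg (by positivity : (0:ℝ) ≤ 3 / 2 * P)
          (by linarith : (0:ℝ) ≤ Real.sqrt t - (k:ℝ))]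
      linarith
    rcases le_or_gt (k : ℝ) t with hcase2 | hcase2
    · -- √t < k ≤ t
      have hsqt0 : (0 : ℝ) < Real.sqrt t := Real.sqrt_pos.2 ht0
      have hlkt : Real.log t / 2 ≤ Real.log (k:ℝ) := by
        have h1 := Real.log_le_log hsqt0 hcase.le
        rwa [Real.log_sqrt ht0.le] at h1
      have h1 : (lam k).re * Real.log (k:ℝ) ≤ 3 / 2 * (P * t) := by
        have h2 : (1 + c * (Real.log (Real.log (k:ℝ)) / Real.log (k:ℝ))) * (P * (k:ℝ))
            ≤ 3 / 2 * (P * (k:ℝ)) := by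
          nlinarith [mul_nonneg hPk0 (by linarith : (0:ℝ) ≤ 1 / 2 -
            c * (Real.log (Real.log (k:ℝ)) / Real.log (k:ℝ)))]
        nlinarith [mul_nonneg (by positivity : (0:ℝ) ≤ 3 / 2 * P)
          (by linarith : (0:ℝ) ≤ t - (k:ℝ))]
      have h2 : (lam k).re * (Real.log t / 2) ≤ (lam k).re * Real.log (k:ℝ) :=
        mul_le_mul_of_nonneg_left hlkt hre0
      have h3 : (lam k).re * Real.log t ≤ t * Real.log t := by
        have h4 : 3 * P * t ≤ Real.log t * t := mul_le_mul_of_nonneg_right hLt3P ht0.le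
        nlinarith
      exact le_of_mul_le_mul_right (by linarith [h3]) hLt0
    · -- t < k
      have hlkt : Real.log t ≤ Real.log (k:ℝ) := Real.log_le_log ht0 hcase2.le
      rw [div_mul_eq_mul_div, le_div_iff₀ hP] at hkle
      -- hkle : k * P ≤ t * log t * (1 - 3 c u)
      have h3cu0 : (0:ℝ) ≤ 3 * c * u := by positivity
      have hkt2 : (k : ℝ) ≤ t * t := by
        have h1 : t * Real.log t * (1 - 3 * c * u) ≤ t * Real.log t := by
          nlinarith [mul_nonneg (mul_nonneg ht0.le hLt0.le) h3cu0]
        have h2 : t * Real.log t ≤ t * (P * t) := mul_le_mul_of_nonneg_left heLtPt ht0.le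
        have h3 : (k:ℝ) * P ≤ t * t * P := by nlinarith
        exact le_of_mul_le_mul_right h3 hP
      have hlk2 : Real.log (k:ℝ) ≤ 2 * Real.log t := by
        have h1 : Real.log (k:ℝ) ≤ Real.log (t * t) := Real.log_le_log hkpos hkt2
        rw [Real.log_mul (ne_of_gt ht0) (ne_of_gt ht0)] at h1
        linarith
      have hllk2 : Real.log (Real.log (k:ℝ)) ≤ 2 * Real.log (Real.log t) := by
        have h1 : Real.log (Real.log (k:ℝ)) ≤ Real.log (2 * Real.log t) :=
          Real.log_le_log hlk0 hlk2
        rw [Real.log_mul two_ne_zero (ne_of_gt hLt0)] at h1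
        linarith
      have hεu : c * (Real.log (Real.log (k:ℝ)) / Real.log (k:ℝ)) ≤ 2 * c * u := by
        have h1 : Real.log (Real.log (k:ℝ)) / Real.log (k:ℝ)
            ≤ 2 * Real.log (Real.log t) / Real.log t :=
          div_le_div₀ (by linarith) hllk2 hLt0 hlkt
        have h2 : 2 * Real.log (Real.log t) / Real.log t = 2 * u := by
          rw [hu_def]; ring
        rw [h2] at h1
        calc c * (Real.log (Real.log (k:ℝ)) / Real.log (k:ℝ)) ≤ c * (2 * u) :=
            mul_le_mul_of_nonneg_left h1 hc0.le
          _ = 2 * c * u := by ring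
      have s1 : (lam k).re * Real.log (k:ℝ) ≤ (1 + 2 * c * u) * (P * (k:ℝ)) := by
        nlinarith [mul_nonneg hPk0 (by linarith : (0:ℝ) ≤ 2 * c * u -
          c * (Real.log (Real.log (k:ℝ)) / Real.log (k:ℝ)))]
      have s2 : (1 + 2 * c * u) * ((k:ℝ) * P) ≤ (1 + 2 * c * u) * (t * Real.log t * (1 - 3 * c * u)) :=
        mul_le_mul_of_nonneg_left hkle (by linarith)
      have s3 : (1 + 2 * c * u) * (t * Real.log t * (1 - 3 * c * u)) ≤ t * Real.log t := by
        have hcu0 : (0:ℝ) ≤ c * u := by positivity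
        nlinarith [mul_nonneg (mul_nonneg (mul_nonneg ht0.le hLt0.le) hcu0) hcu0,
          mul_nonneg (mul_nonneg ht0.le hLt0.le) hcu0]
      have s4 : t * Real.log t ≤ t * Real.log (k:ℝ) := mul_le_mul_of_nonneg_left hlkt ht0.le
      have s5 : (lam k).re * Real.log (k:ℝ) ≤ t * Real.log (k:ℝ) := by nlinarith [s1, s2, s3, s4]
      exact le_of_mul_le_mul_right s5 hlk0
  exact final_step P c hP hc1 k₀ k₁ hk₁0 lam lam₀
    (fun k hk => (key k hk).2.2.2.1) claimUp claimLow
end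

section
/- For b > 0, m > 0, the phase-space volume satisfies (1/(2π)) · Vol{(r, ρ) ∈ [0,∞) × ℝ : ρ² + m² e^{2br} ≤ λ²} = λ log λ / (π b) + O(λ) as λ → ∞. -/
open Filter Asymptotics MeasureTheory

open Set

set_option maxHeartbeats 1600000 in
/-- The phase-space volume for `-∂_r² + m² e^{2br}` on `(0,∞)` satisfies
`(1/2π) Vol{(r,ρ) : r ≥ 0, ρ² + m² e^{2br} ≤ λ²} = λ log λ/(π b) + O(λ)`. -/
theorem weyl_phase_space_volume (b m : ℝ) (hb : 0 < b) (hm : 0 < m) :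
    (fun lam : ℝ =>
      (1 / (2 * Real.pi)) *
        (volume {p : ℝ × ℝ | 0 ≤ p.1 ∧ p.2 ^ 2 + m ^ 2 * Real.exp (2 * b * p.1) ≤ lam ^ 2}).toReal
      - lam * Real.log lam / (Real.pi * b))
      =O[atTop] (fun lam => lam) := by
  have hπ := Real.pi_pos
  rw [isBigO_iff]
  refine ⟨(|Real.log m| + 1) / (Real.pi * b), ?_⟩
  filter_upwards [eventually_ge_atTop (max m 1)] with lam hlam
  have hlam1 : (1:ℝ) ≤ lam := le_trans (le_max_right _ _) hlam
  have hlamm : m ≤ lam := le_trans (le_max_left _ _) hlam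
  have hlam0 : 0 < lam := lt_of_lt_of_le one_pos hlam1
  set R : ℝ := (Real.log lam - Real.log m) / b with hRdef
  have hlogle : Real.log m ≤ Real.log lam := Real.log_le_log hm hlamm
  have hR0 : 0 ≤ R := div_nonneg (sub_nonneg.2 hlogle) hb.le
  have hRb : R * b = Real.log lam - Real.log m := by rw [hRdef]; field_simp
  set S : Set (ℝ × ℝ) :=
    {p : ℝ × ℝ | 0 ≤ p.1 ∧ p.2 ^ 2 + m ^ 2 * Real.exp (2 * b * p.1) ≤ lam ^ 2} with hS
  have hexp2 : ∀ r : ℝ, Real.exp (2 * b * r) = Real.exp (b * r) ^ 2 := by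
    intro r
    rw [sq, ← Real.exp_add]; ring_nf
  have hexp_le : ∀ r : ℝ, r ≤ R → m * Real.exp (b * r) ≤ lam := by
    intro r hr
    have h1 : b * r ≤ Real.log lam - Real.log m := by
      calc b * r ≤ b * R := mul_le_mul_of_nonneg_left hr hb.le
        _ = Real.log lam - Real.log m := by rw [mul_comm]; exact hRb
    have h2 : Real.exp (b * r) ≤ Real.exp (Real.log lam - Real.log m) := Real.exp_le_exp.2 h1
    have h3 : Real.exp (Real.log lam - Real.log m) = lam / m := by
      rw [Real.exp_sub, Real.exp_log hlam0, Real.exp_log hm]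
    rw [h3] at h2
    calc m * Real.exp (b * r) ≤ m * (lam / m) := mul_le_mul_of_nonneg_left h2 hm.le
      _ = lam := by field_simp
  -- upper bound
  have hsub : S ⊆ Icc 0 R ×ˢ Icc (-lam) lam := by
    rintro ⟨r, ρ⟩ ⟨hr0, hineq⟩
    simp only [Set.mem_setOf_eq] at hineq
    have hme : (m * Real.exp (b * r)) ^ 2 ≤ lam ^ 2 := by
      rw [mul_pow, ← hexp2]; nlinarith [sq_nonneg ρ]
    have hme' : m * Real.exp (b * r) ≤ lam := by
      nlinarith [Real.exp_pos (b * r), mul_pos hm (Real.exp_pos (b * r))]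
    have hrR : r ≤ R := by
      have : Real.exp (b * r) ≤ lam / m := by
        rw [le_div_iff₀ hm]; linarith [hme']
      have h4 : b * r ≤ Real.log (lam / m) := by
        rw [← Real.log_exp (b * r)]
        exact Real.log_le_log (Real.exp_pos _) this
      rw [Real.log_div hlam0.ne' hm.ne'] at h4
      rw [hRdef, le_div_iff₀ hb]
      linarith
    have hρ : ρ ∈ Icc (-lam) lam := by
      constructor <;> nlinarith [Real.exp_pos (2 * b * r), sq_nonneg m,
        mul_pos (mul_pos hm hm) (Real.exp_pos (2 * b * r)), sq_nonneg (m * Real.exp (b * r))]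
    exact ⟨⟨hr0, hrR⟩, hρ⟩
  have hupper : volume S ≤ ENNReal.ofReal (R * (2 * lam)) := by
    calc volume S ≤ volume (Icc 0 R ×ˢ Icc (-lam) lam) := measure_mono hsub
      _ = ENNReal.ofReal (R * (2 * lam)) := by
        rw [Measure.volume_eq_prod, Measure.prod_prod, Real.volume_Icc, Real.volume_Icc,
          ← ENNReal.ofReal_mul (by linarith)]
        norm_num
        ring_nf
  have hfin : volume S ≠ ⊤ := (lt_of_le_of_lt hupper ENNReal.ofReal_lt_top).ne
  -- lower bound via regionBetween
  set f : ℝ → ℝ := fun r => lam - m * Real.exp (b * r) with hf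
  have hfc : ContinuousOn f (Icc 0 R) := by fun_prop
  have hfint : IntegrableOn f (Icc 0 R) := hfc.integrableOn_compact isCompact_Icc
  have hTsub : regionBetween (fun r => -(f r)) f (Icc 0 R) ⊆ S := by
    rintro ⟨r, ρ⟩ ⟨hr, hρ⟩
    simp only [Set.mem_Ioo] at hρ
    have hrR : r ≤ R := hr.2
    have hme' : m * Real.exp (b * r) ≤ lam := hexp_le r hrR
    have habs : ρ ^ 2 ≤ (lam - m * Real.exp (b * r)) ^ 2 := by
      have h1 : -(lam - m * Real.exp (b * r)) < ρ := hρ.1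
      have h2 : ρ < lam - m * Real.exp (b * r) := hρ.2
      nlinarith
    refine ⟨hr.1, ?_⟩
    simp only [Set.mem_setOf_eq]
    rw [hexp2, ← mul_pow]
    nlinarith [mul_pos hm (Real.exp_pos (b * r))]
  have hvolT : volume (regionBetween (fun r => -(f r)) f (Icc 0 R))
      = ENNReal.ofReal (∫ y in Icc 0 R, (f - fun r => -(f r)) y) := by
    rw [Measure.volume_eq_prod]
    exact volume_regionBetween_eq_integral hfint.neg hfint measurableSet_Icc
      (fun x hx => by
        have := hexp_le x hx.2
        simp only [hf]
        nlinarith)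
  have hint : (∫ y in Icc 0 R, (f - fun r => -(f r)) y) = 2 * lam * R - 2 * (lam - m) / b := by
    have h1 : (∫ y in Icc 0 R, (f - fun r => -(f r)) y)
        = ∫ y in (0:ℝ)..R, (2 * lam - 2 * m * Real.exp (b * y)) := by
      rw [MeasureTheory.integral_Icc_eq_integral_Ioc,
        ← intervalIntegral.integral_of_le hR0]
      congr 1
      ext y
      simp [hf]; ring
    rw [h1]
    have h2 : ∀ y ∈ Set.uIcc (0:ℝ) R, HasDerivAt
        (fun y => 2 * lam * y - 2 * m / b * Real.exp (b * y))
        (2 * lam - 2 * m * Real.exp (b * y)) y := by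
      intro y _
      have hd1 : HasDerivAt (fun y : ℝ => b * y) b y := by
        simpa using (hasDerivAt_id y).const_mul b
      have hd2 : HasDerivAt (fun y => Real.exp (b * y)) (Real.exp (b * y) * b) y :=
        (Real.hasDerivAt_exp (b * y)).comp y hd1
      have hd3 := ((hasDerivAt_id y).const_mul (2 * lam)).sub (hd2.const_mul (2 * m / b))
      convert hd3 using 1
      · rfl
      · rfl
      · rfl
      · rw [mul_one, mul_comm (Real.exp (b * y)) b, ← mul_assoc, div_mul_cancel₀ _ hb.ne']
    have h3 := intervalIntegral.integral_eq_sub_of_hasDerivAt h2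
      (Continuous.intervalIntegrable (by fun_prop) 0 R)
    rw [h3]
    have hbR : Real.exp (b * R) = lam / m := by
      rw [mul_comm, hRb, Real.exp_sub, Real.exp_log hlam0, Real.exp_log hm]
    rw [hbR]
    simp only [mul_zero, Real.exp_zero]
    field_simp
    ring
  have hlow : ENNReal.ofReal (2 * lam * R - 2 * (lam - m) / b) ≤ volume S := by
    rw [← hint, ← hvolT]
    exact measure_mono hTsub
  set V : ℝ := (volume S).toReal with hV
  have hVle : V ≤ R * (2 * lam) :=
    ENNReal.toReal_le_of_le_ofReal (by positivity) hupper
  have hVge : 2 * lam * R - 2 * (lam - m) / b ≤ V := by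
    rcases le_or_gt (2 * lam * R - 2 * (lam - m) / b) 0 with h | h
    · exact h.trans ENNReal.toReal_nonneg
    · exact (ENNReal.ofReal_le_iff_le_toReal hfin).mp hlow
  -- final arithmetic
  have hkey : 1 / (2 * Real.pi) * V - lam * Real.log lam / (Real.pi * b)
      = (V * b / 2 - lam * Real.log lam) / (Real.pi * b) := by
    field_simp
  rw [Real.norm_eq_abs, Real.norm_eq_abs, abs_of_pos hlam0, hkey, div_mul_eq_mul_div, abs_div,
    abs_of_pos (by positivity : (0:ℝ) < Real.pi * b)]
  apply div_le_div_of_nonneg_right ?_ (by positivity)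
  rw [abs_le]
  have hb1 : 2 * lam * (Real.log lam - Real.log m) - 2 * (lam - m) ≤ V * b := by
    calc 2 * lam * (Real.log lam - Real.log m) - 2 * (lam - m)
        = (2 * lam * R - 2 * (lam - m) / b) * b := by rw [← hRb]; field_simp
      _ ≤ V * b := mul_le_mul_of_nonneg_right hVge hb.le
  have hb2 : V * b ≤ 2 * lam * (Real.log lam - Real.log m) := by
    calc V * b ≤ R * (2 * lam) * b := mul_le_mul_of_nonneg_right hVle hb.le
      _ = 2 * lam * (Real.log lam - Real.log m) := by rw [← hRb]; ring
  have hml1 : lam * Real.log m ≤ lam * |Real.log m| :=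
    mul_le_mul_of_nonneg_left (le_abs_self _) hlam0.le
  have hml2 : lam * (-Real.log m) ≤ lam * |Real.log m| :=
    mul_le_mul_of_nonneg_left (neg_le_abs _) hlam0.le
  constructor <;> nlinarith
end
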